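/- arXiv:1205.6558 — 2 statements merged into one kernel-verified Lean document; each statement's English description precedes it below -/
import Mathlib

section
/- (Consistency) A conduct A and its orthogonal A^⊥ cannot both contain a successful project: if a = (0,A) and b = (0,B) are projects whose collapsed graphs Â, B̂ are disjoint unions of transpositions (all weights 1), then ⟪a,b⟫ ∈ {0, ∞}, hence a and b are not orthogonal. -/
open scoped ENNReal

/-- A directed weighted graph with a definite (finite) set of vertex locations. -/
structure EGraph (V : Type) where
  verts : Finset V
  E : Type
  src : E → V
  tgt : E → V
  w : E → ℝ≥0∞
  src_mem : ∀ e, src e ∈ verts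
  tgt_mem : ∀ e, tgt e ∈ verts

namespace EGraph

variable {V : Type} [DecidableEq V]

/-- source of an edge of the plugging `G □ H` -/
def psrc (G H : EGraph V) : G.E ⊕ H.E → V := Sum.elim G.src H.src

/-- target of an edge of the plugging `G □ H` -/
def ptgt (G H : EGraph V) : G.E ⊕ H.E → V := Sum.elim G.tgt H.tgt

/-- weight of an edge of the plugging `G □ H` -/
def pw (G H : EGraph V) : G.E ⊕ H.E → ℝ≥0∞ := Sum.elim G.w H.w

/-- An alternating path in the plugging `G □ H`: a nonempty composable sequence of
colored edges whose consecutive edges have distinct colors. -/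
structure AltPath (G H : EGraph V) where
  edges : List (G.E ⊕ H.E)
  ne : edges ≠ []
  chain : edges.Chain' (fun e f => ptgt G H e = psrc G H f ∧ e.isLeft ≠ f.isLeft)

variable {G H : EGraph V}

def AltPath.src (p : AltPath G H) : V := psrc G H (p.edges.head p.ne)
def AltPath.tgt (p : AltPath G H) : V := ptgt G H (p.edges.getLast p.ne)

noncomputable def AltPath.weight (p : AltPath G H) : ℝ≥0∞ :=
  (p.edges.map (pw G H)).prod

/-- An alternating cycle: the target of the last edge is the source of the first one,
and moreover the colors of the last and first edges differ. -/
def AltPath.IsCycle (p : AltPath G H) : Prop :=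
  p.tgt = p.src ∧ (p.edges.getLast p.ne).isLeft ≠ (p.edges.head p.ne).isLeft

/-- A list is primitive (a `1`-cycle) when it is not a proper power of a shorter list. -/
def PrimitiveList {α : Type*} (l : List α) : Prop :=
  ∀ (k : ℕ) (r : List α), l = (List.replicate k r).flatten → k = 1

def AltPath.IsOneCycle (p : AltPath G H) : Prop := p.IsCycle ∧ PrimitiveList p.edges

/-- Equivalence of alternating 1-cycles up to cyclic permutation. -/
def cycSetoid (G H : EGraph V) : Setoid {p : AltPath G H // p.IsOneCycle} where
  r p q := ∃ k, q.1.edges = p.1.edges.rotate k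
  iseqv := by
    constructor
    · exact fun p => ⟨0, (p.1.edges.rotate_zero).symm⟩
    · rintro p q ⟨k, hk⟩
      refine ⟨p.1.edges.length * (k + 1) - k, ?_⟩
      rw [hk, List.rotate_rotate]
      rcases Nat.eq_zero_or_pos p.1.edges.length with h0 | hpos
      · rw [List.length_eq_zero_iff] at h0
        simp [h0]
      · have hkle : k ≤ p.1.edges.length * (k + 1) := by nlinarith
        rw [Nat.add_sub_cancel' hkle, List.rotate_length_mul]
    · rintro p q r ⟨k, hk⟩ ⟨m, hm⟩
      exact ⟨k + m, by rw [hm, hk, List.rotate_rotate]⟩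

/-- The set of alternating 1-circuits between `G` and `H`: alternating 1-cycles up to
cyclic permutation. -/
def Circ (G H : EGraph V) := Quotient (cycSetoid G H)

/-- The weight of a circuit. -/
noncomputable def cweight {G H : EGraph V} : Circ G H → ℝ≥0∞ :=
  Quotient.lift (fun p => p.1.weight)
    (by
      rintro p q ⟨k, hk⟩
      show p.1.weight = q.1.weight
      unfold AltPath.weight
      rw [hk]
      exact (((p.1.edges.map (pw G H)).rotate_perm k).prod_eq).symm.trans (by rw [List.map_rotate]))

/-- `-log(1-x)`, valued in `[0,∞]`, with the convention `log 0 = -∞`. -/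
noncomputable def mval (x : ℝ≥0∞) : ℝ≥0∞ :=
  if 1 ≤ x then ⊤ else ENNReal.ofReal (-Real.log (1 - x.toReal))

/-- The measurement `⟪G,H⟫ = Σ_{π ∈ C(G,H)} -log(1-ω(π))`. -/
noncomputable def meas (G H : EGraph V) : ℝ≥0∞ := ∑' c : Circ G H, mval (cweight c)

/-- The extended measurement value `Σ_{k ≥ 1} x^k / k`. -/
noncomputable def mvalExt (x : ℝ≥0∞) : ℝ≥0∞ := ∑' k : ℕ, x ^ (k + 1) / (k + 1)

/-- The measurement extended to arbitrary weights. -/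
noncomputable def measExt (G H : EGraph V) : ℝ≥0∞ := ∑' c : Circ G H, mvalExt (cweight c)

/-- The union of two graphs: union of the vertices, disjoint union of the edges. -/
def union (G H : EGraph V) : EGraph V where
  verts := G.verts ∪ H.verts
  E := G.E ⊕ H.E
  src := psrc G H
  tgt := ptgt G H
  w := pw G H
  src_mem := by
    rintro (e | e)
    · exact Finset.mem_union_left _ (G.src_mem e)
    · exact Finset.mem_union_right _ (H.src_mem e)
  tgt_mem := by
    rintro (e | e)
    · exact Finset.mem_union_left _ (G.tgt_mem e)
    · exact Finset.mem_union_right _ (H.tgt_mem e)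

/-- The reduction `G ∷ H`: vertices the symmetric difference, edges the alternating
paths with endpoints in the symmetric difference, weighted multiplicatively. -/
noncomputable def reduct (G H : EGraph V) : EGraph V where
  verts := symmDiff G.verts H.verts
  E := {p : AltPath G H //
        p.src ∈ symmDiff G.verts H.verts ∧ p.tgt ∈ symmDiff G.verts H.verts}
  src := fun p => p.1.src
  tgt := fun p => p.1.tgt
  w := fun p => p.1.weight
  src_mem := fun p => p.2.1
  tgt_mem := fun p => p.2.2

/-- The collapsed (simple) graph `Ĝ`, with weights the sums of the weights of parallel
edges. -/
noncomputable def adj (G : EGraph V) (v u : V) : ℝ≥0∞ :=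
  ∑' e : {e : G.E // G.src e = v ∧ G.tgt e = u}, G.w e.1

noncomputable def collapse (G : EGraph V) : EGraph V where
  verts := G.verts
  E := {p : V × V // ∃ e : G.E, G.src e = p.1 ∧ G.tgt e = p.2}
  src := fun p => p.1.1
  tgt := fun p => p.1.2
  w := fun p => adj G p.1.1 p.1.2
  src_mem := fun p => by obtain ⟨e, he, _⟩ := p.2; show p.1.1 ∈ G.verts; rw [← he]; exact G.src_mem e
  tgt_mem := fun p => by obtain ⟨e, _, he⟩ := p.2; show p.1.2 ∈ G.verts; rw [← he]; exact G.tgt_mem e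

end EGraph

open EGraph

variable {V : Type} [DecidableEq V]

private lemma list_prod_pos {l : List ℝ≥0∞} (h : ∀ x ∈ l, 0 < x) : 0 < l.prod := by
  induction l with
  | nil => simp
  | cons a t ih =>
    rw [List.prod_cons]
    exact ENNReal.mul_pos (h a List.mem_cons_self).ne'
      (ih fun x hx => h x (List.mem_cons_of_mem _ hx)).ne'

private lemma list_prod_le_one {l : List ℝ≥0∞} (h : ∀ x ∈ l, x ≤ 1) : l.prod ≤ 1 := by
  induction l with
  | nil => simp
  | cons a t ih =>
    rw [List.prod_cons]
    exact mul_le_one' (h a List.mem_cons_self)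
      (ih fun x hx => h x (List.mem_cons_of_mem _ hx))

/-- A project: a wager together with a weighted directed graph whose weights lie in
`(0,1]`. -/
structure Project (V : Type) where
  wager : ℝ≥0∞
  graph : EGraph V
  wpos : ∀ e, 0 < graph.w e
  wle : ∀ e, graph.w e ≤ 1

namespace Project

def carrier (p : Project V) : Finset V := p.graph.verts

/-- The measurement `⟪a,b⟫ = a + b + ⟪A,B⟫` of the interaction of two projects. -/
noncomputable def pmeas (p q : Project V) : ℝ≥0∞ := p.wager + q.wager + meas p.graph q.graph

/-- Orthogonality: the measurement is neither `0` nor `∞`. -/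
def orth (p q : Project V) : Prop := pmeas p q ≠ 0 ∧ pmeas p q ≠ ⊤

/-- Tensor product of projects. -/
noncomputable def tensor (p q : Project V) : Project V where
  wager := pmeas p q
  graph := union p.graph q.graph
  wpos := by rintro (e | e); exacts [p.wpos e, q.wpos e]
  wle := by rintro (e | e); exacts [p.wle e, q.wle e]

/-- The cut of two projects (meaningful when `⟪p,q⟫ ≠ ∞`). -/
noncomputable def cut (p q : Project V) : Project V where
  wager := pmeas p q
  graph := reduct p.graph q.graph
  wpos := by
    rintro ⟨e, -⟩
    refine list_prod_pos ?_
    intro x hx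
    obtain ⟨d, -, rfl⟩ := List.mem_map.1 hx
    rcases d with d | d
    exacts [p.wpos d, q.wpos d]
  wle := by
    rintro ⟨e, -⟩
    refine list_prod_le_one ?_
    intro x hx
    obtain ⟨d, -, rfl⟩ := List.mem_map.1 hx
    rcases d with d | d
    exacts [p.wle d, q.wle d]

end Project

open Project

/-- The orthogonal of a set of projects, relative to a carrier `X`. -/
def perpOn (X : Finset V) (S : Set (Project V)) : Set (Project V) :=
  {q | q.carrier = X ∧ ∀ p ∈ S, orth p q}

/-- A conduct of carrier `X`: a nonempty set of projects of carrier `X` equal to its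
biorthogonal. -/
structure IsConduct (X : Finset V) (S : Set (Project V)) : Prop where
  nonempty : S.Nonempty
  carrier_eq : ∀ p ∈ S, p.carrier = X
  biorth : S = perpOn X (perpOn X S)

/-- `A ⊙ B`: the set of tensor products of members. -/
def setTens (A B : Set (Project V)) : Set (Project V) :=
  {r | ∃ a ∈ A, ∃ b ∈ B, r = a.tensor b}

/-- The tensor product of conducts: `A ⊗ B = (A ⊙ B)^⊥⊥`. -/
def tensConduct (X Y : Finset V) (A B : Set (Project V)) : Set (Project V) :=
  perpOn (X ∪ Y) (perpOn (X ∪ Y) (setTens A B))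

/-- The linear implication `A ⊸ B = {f | ∀ a ∈ A, f ∷ a is defined and lies in B}`. -/
def limp (X Y : Finset V) (A B : Set (Project V)) : Set (Project V) :=
  {f | f.carrier = X ∪ Y ∧ ∀ a ∈ A, pmeas f a ≠ ⊤ ∧ f.cut a ∈ B}

/-- The trace of (the collapse of) a graph. -/
noncomputable def gtrace (G : EGraph V) : ℝ≥0∞ := ∑ v ∈ G.verts, adj G v v

/-- The collapsed graph `Ĝ` is symmetric. -/
def SymmAdj (G : EGraph V) : Prop := ∀ v u, adj G v u = adj G u v

/-- `Ĝ³ = Ĝ`: the (adjacency matrix of the) graph of paths of length 3 in `Ĝ`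
coincides with `Ĝ`. -/
def CubeAdj (G : EGraph V) : Prop :=
  ∀ v u, (∑ u₁ ∈ G.verts, ∑ u₂ ∈ G.verts, adj G v u₁ * adj G u₁ u₂ * adj G u₂ u) = adj G v u

/-- A successful project: zero wager, collapsed graph symmetric, cube-idempotent and
traceless. -/
def Successful (p : Project V) : Prop :=
  p.wager = 0 ∧ SymmAdj p.graph ∧ CubeAdj p.graph ∧ gtrace p.graph = 0

/-- The collapsed graph is a disjoint union of weight-1 transpositions. -/
def IsDUT (G : EGraph V) : Prop :=
  (∀ v u, adj G v u ≠ 0 → adj G v u = 1) ∧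
  (∀ v u, adj G v u = adj G u v) ∧
  (∀ v u u', adj G v u ≠ 0 → adj G v u' ≠ 0 → u = u') ∧
  (∀ v v' u, adj G v u ≠ 0 → adj G v' u ≠ 0 → v = v') ∧
  (∀ v, adj G v v = 0)

/-- Isomorphism of located graphs: same vertices, and a weight- and endpoint-preserving
bijection of the edges. -/
def EGraph.IsIso (G H : EGraph V) : Prop :=
  G.verts = H.verts ∧ ∃ e : G.E ≃ H.E,
    (∀ x, H.src (e x) = G.src x) ∧ (∀ x, H.tgt (e x) = G.tgt x) ∧ (∀ x, H.w (e x) = G.w x)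

/-- Equality of projects up to graph isomorphism. -/
def Project.Equiv (p q : Project V) : Prop :=
  p.wager = q.wager ∧ EGraph.IsIso p.graph q.graph

/-! ### Auxiliary material for the consistency theorem -/

section ConsistencyAux

open EGraph

variable {V : Type} [DecidableEq V] {G H : EGraph V}

set_option linter.unusedSectionVars false

/-! #### List lemmas -/

lemma getElem_idx_congr {α : Type*} (l : List α) {i j : ℕ} (h : i = j)
    {hi : i < l.length} {hj : j < l.length} : l[i]'hi = l[j]'hj := by
  subst h; rfl

lemma flatten_replicate_add {α : Type*} (m n : ℕ) (p : List α) :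
    (List.replicate (m + n) p).flatten
      = (List.replicate m p).flatten ++ (List.replicate n p).flatten := by
  rw [List.replicate_add, List.flatten_append]

lemma length_flatten_replicate {α : Type*} (m : ℕ) (p : List α) :
    (List.replicate m p).flatten.length = m * p.length := by
  induction m with
  | zero => simp
  | succ k ih =>
      rw [List.replicate_succ, List.flatten_cons, List.length_append, ih]; ring

lemma prod_map_flatten_replicate {α : Type*} (f : α → ℝ≥0∞) (m : ℕ) (p : List α) :
    ((List.replicate m p).flatten.map f).prod = ((p.map f).prod) ^ m := by
  induction m with
  | zero => simp
  | succ k ih =>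
      rw [List.replicate_succ, List.flatten_cons, List.map_append, List.prod_append, ih,
        pow_succ]
      ring

lemma flatten_replicate_flatten {α : Type*} (k j : ℕ) (p : List α) :
    (List.replicate k (List.replicate j p).flatten).flatten
      = (List.replicate (k * j) p).flatten := by
  induction k with
  | zero => simp
  | succ i ih =>
      rw [List.replicate_succ, List.flatten_cons, ih, ← flatten_replicate_add]
      congr 1
      ring

/-- Every nonempty list is a positive power of a primitive list. -/
lemma exists_primitive {α : Type*} :
    ∀ (n : ℕ) (l : List α), l.length ≤ n → l ≠ [] →
      ∃ (p : List α) (m : ℕ), 0 < m ∧ l = (List.replicate m p).flatten ∧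
        EGraph.PrimitiveList p := by
  intro n
  induction n with
  | zero =>
      intro l hlen hne
      rw [Nat.le_zero, List.length_eq_zero_iff] at hlen
      exact absurd hlen hne
  | succ n ih =>
      intro l hlen hne
      by_cases hp : EGraph.PrimitiveList l
      · exact ⟨l, 1, one_pos, by simp, hp⟩
      · unfold EGraph.PrimitiveList at hp
        push_neg at hp
        obtain ⟨k, r, hkr, hk1⟩ := hp
        have hk0 : k ≠ 0 := by
          rintro rfl
          simp at hkr
          exact hne hkr
        have hk2 : 2 ≤ k := by omega
        have hrne : r ≠ [] := by
          rintro rfl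
          apply hne
          rw [← List.length_eq_zero_iff, hkr, length_flatten_replicate]
          simp
        have hlr : l.length = k * r.length := by rw [hkr, length_flatten_replicate]
        have hr1 : 1 ≤ r.length := List.length_pos_iff.mpr hrne
        have hrlt : r.length ≤ n := by
          have h2 : 2 * r.length ≤ k * r.length := Nat.mul_le_mul_right _ hk2
          omega
        obtain ⟨p, m, hm, hdec, hprim⟩ := ih r hrlt hrne
        refine ⟨p, k * m, by positivity, ?_, hprim⟩
        rw [hkr, hdec, flatten_replicate_flatten]

/-! #### Cyclic chains -/

/-- The "cyclic chain" condition on a list of colored edges. -/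
def CC (G H : EGraph V) (l : List (G.E ⊕ H.E)) : Prop :=
  ∀ i : Fin l.length,
    ptgt G H (l[(i : ℕ)]'i.2)
        = psrc G H (l[((i : ℕ) + 1) % l.length]'(Nat.mod_lt _ i.pos)) ∧
    (l[(i : ℕ)]'i.2).isLeft ≠ (l[((i : ℕ) + 1) % l.length]'(Nat.mod_lt _ i.pos)).isLeft

lemma cc_of_cycle (p : AltPath G H) (hc : p.IsCycle) : CC G H p.edges := by
  intro i
  have hlen : 0 < p.edges.length := List.length_pos_iff.mpr p.ne
  rcases Nat.lt_or_ge ((i : ℕ) + 1) p.edges.length with h | h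
  · have hmod : ((i : ℕ) + 1) % p.edges.length = (i : ℕ) + 1 := Nat.mod_eq_of_lt h
    have hch := List.isChain_iff_getElem.mp p.chain (i : ℕ) (by omega)
    refine ⟨?_, ?_⟩
    · rw [getElem_idx_congr _ hmod]
      exact hch.1
    · rw [getElem_idx_congr _ hmod]
      exact hch.2
  · have hi : (i : ℕ) = p.edges.length - 1 := by omega
    have hmod : ((i : ℕ) + 1) % p.edges.length = 0 := by
      have h1 : (i : ℕ) + 1 = p.edges.length := by omega
      rw [h1, Nat.mod_self]
    obtain ⟨h1, h2⟩ := hc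
    unfold AltPath.tgt AltPath.src at h1
    rw [List.getLast_eq_getElem, List.head_eq_getElem_zero] at h1
    rw [List.getLast_eq_getElem, List.head_eq_getElem_zero] at h2
    refine ⟨?_, ?_⟩
    · rw [getElem_idx_congr _ hmod, getElem_idx_congr _ hi]
      exact h1
    · rw [getElem_idx_congr _ hmod, getElem_idx_congr _ hi]
      exact h2

lemma cycle_of_cc (l : List (G.E ⊕ H.E)) (hne : l ≠ []) (h : CC G H l) :
    ∃ p : AltPath G H, p.edges = l ∧ p.IsCycle := by
  have hlen : 0 < l.length := List.length_pos_iff.mpr hne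
  have hchain : l.Chain' (fun e f => ptgt G H e = psrc G H f ∧ e.isLeft ≠ f.isLeft) := by
    refine List.isChain_iff_getElem.mpr ?_
    intro i hi
    have hmod : (i + 1) % l.length = i + 1 := Nat.mod_eq_of_lt (by omega)
    have h2 := h ⟨i, by omega⟩
    refine ⟨?_, ?_⟩
    · rw [← getElem_idx_congr l hmod (hi := Nat.mod_lt _ hlen)]
      exact h2.1
    · rw [← getElem_idx_congr l hmod (hi := Nat.mod_lt _ hlen)]
      exact h2.2
  refine ⟨⟨l, hne, hchain⟩, rfl, ?_, ?_⟩
  · have h2 := h ⟨l.length - 1, by omega⟩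
    have hmod : (l.length - 1 + 1) % l.length = 0 := by
      rw [Nat.sub_add_cancel hlen, Nat.mod_self]
    show ptgt G H (l.getLast hne) = psrc G H (l.head hne)
    rw [List.getLast_eq_getElem, List.head_eq_getElem_zero]
    rw [← getElem_idx_congr l hmod (hi := Nat.mod_lt _ hlen)]
    exact h2.1
  · have h2 := h ⟨l.length - 1, by omega⟩
    have hmod : (l.length - 1 + 1) % l.length = 0 := by
      rw [Nat.sub_add_cancel hlen, Nat.mod_self]
    show ((l.getLast hne).isLeft ≠ (l.head hne).isLeft)
    rw [List.getLast_eq_getElem, List.head_eq_getElem_zero]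
    rw [← getElem_idx_congr l hmod (hi := Nat.mod_lt _ hlen)]
    exact h2.2

lemma cc_pow {l p : List (G.E ⊕ H.E)} {m : ℕ} (hm : 0 < m) (hp : p ≠ [])
    (hl : l = (List.replicate m p).flatten) (h : CC G H l) : CC G H p := by
  obtain ⟨k, rfl⟩ : ∃ k, m = k + 1 := ⟨m - 1, by omega⟩
  have hppos : 0 < p.length := List.length_pos_iff.mpr hp
  have hl' : l = p ++ (List.replicate k p).flatten := by
    rw [hl, List.replicate_succ, List.flatten_cons]
  have hL : l.length = (k + 1) * p.length := by rw [hl, length_flatten_replicate]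
  have hlsz : p.length ≤ l.length := by rw [hL]; nlinarith
  have hget : ∀ (i : ℕ) (hi : i < p.length),
      l[i]'(lt_of_lt_of_le hi hlsz) = p[i]'hi := by
    intro i hi
    rw [List.getElem_of_eq hl' (lt_of_lt_of_le hi hlsz), List.getElem_append_left hi]
  intro i
  have hiL : (i : ℕ) < l.length := lt_of_lt_of_le i.2 hlsz
  have hcc := h ⟨(i : ℕ), hiL⟩
  rcases Nat.lt_or_ge ((i : ℕ) + 1) p.length with hlt | hge
  · have hm1 : ((i : ℕ) + 1) % p.length = (i : ℕ) + 1 := Nat.mod_eq_of_lt hlt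
    have hm2 : ((i : ℕ) + 1) % l.length = (i : ℕ) + 1 :=
      Nat.mod_eq_of_lt (lt_of_lt_of_le hlt hlsz)
    rw [getElem_idx_congr l hm2 (hj := lt_of_lt_of_le hlt hlsz), hget _ i.2, hget _ hlt] at hcc
    refine ⟨?_, ?_⟩
    · rw [getElem_idx_congr p hm1]
      exact hcc.1
    · rw [getElem_idx_congr p hm1]
      exact hcc.2
  · have hi1 : (i : ℕ) + 1 = p.length := by omega
    have hm1 : ((i : ℕ) + 1) % p.length = 0 := by rw [hi1, Nat.mod_self]
    rcases Nat.eq_zero_or_pos k with rfl | hk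
    · have hLL : l.length = p.length := by rw [hL]; ring
      have hm2 : ((i : ℕ) + 1) % l.length = 0 := by rw [hLL, hi1, Nat.mod_self]
      rw [getElem_idx_congr l hm2 (hj := by omega), hget _ i.2, hget 0 hppos] at hcc
      refine ⟨?_, ?_⟩
      · rw [getElem_idx_congr p hm1]
        exact hcc.1
      · rw [getElem_idx_congr p hm1]
        exact hcc.2
    · have hplt : p.length < l.length := by rw [hL]; nlinarith
      have hm2 : ((i : ℕ) + 1) % l.length = p.length := by
        rw [hi1]; exact Nat.mod_eq_of_lt hplt
      have h0 : (List.replicate k p).flatten = p ++ (List.replicate (k - 1) p).flatten := by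
        obtain ⟨k', rfl⟩ : ∃ k', k = k' + 1 := ⟨k - 1, by omega⟩
        rw [List.replicate_succ, List.flatten_cons]
        simp
      have hl'' : l = p ++ (p ++ (List.replicate (k - 1) p).flatten) := by
        rw [hl', h0]
      have hgetp : l[p.length]'hplt = p[0]'hppos := by
        rw [List.getElem_of_eq hl'' hplt, List.getElem_append_right (le_refl p.length),
          List.getElem_append_left (by omega : p.length - p.length < p.length)]
        exact getElem_idx_congr p (Nat.sub_self p.length)
      rw [getElem_idx_congr l hm2 (hj := hplt), hget _ i.2, hgetp] at hcc
      refine ⟨?_, ?_⟩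
      · rw [getElem_idx_congr p hm1]
        exact hcc.1
      · rw [getElem_idx_congr p hm1]
        exact hcc.2

/-! #### Circuit length -/

noncomputable def circLen {G H : EGraph V} : Circ G H → ℕ :=
  Quotient.lift (fun p : {p : AltPath G H // p.IsOneCycle} => p.1.edges.length) (by
    rintro p q ⟨k, hk⟩
    show p.1.edges.length = q.1.edges.length
    rw [hk, List.length_rotate])

/-- Decomposition of a cyclic chain as a power of a rotated circuit representative. -/
lemma decomp (G H : EGraph V) (l : List (G.E ⊕ H.E)) (hne : l ≠ []) (hcc : CC G H l) :
    ∃ (c : Circ G H) (m : ℕ) (r : ℕ), 0 < m ∧ m * circLen c = l.length ∧ r < circLen c ∧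
      l = (List.replicate m ((Quotient.out c).1.edges.rotate r)).flatten := by
  obtain ⟨p, m, hm, hflat, hprim⟩ := exists_primitive l.length l (le_refl _) hne
  have hlen : l.length = m * p.length := by rw [hflat, length_flatten_replicate]
  have hppos : 0 < p.length := by
    rcases Nat.eq_zero_or_pos p.length with h0 | h
    · exfalso
      apply hne
      rw [← List.length_eq_zero_iff, hlen, h0, Nat.mul_zero]
    · exact h
  have hpne : p ≠ [] := by
    intro hp0; rw [hp0] at hppos; simp at hppos
  have hccp : CC G H p := cc_pow hm hpne hflat hcc
  obtain ⟨P, hPe, hPc⟩ := cycle_of_cc p hpne hccp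
  have hprim' : EGraph.PrimitiveList P.edges := by rw [hPe]; exact hprim
  have hP1 : P.IsOneCycle := ⟨hPc, hprim'⟩
  set c : Circ G H := Quotient.mk (cycSetoid G H) ⟨P, hP1⟩ with hcdef
  have hclen : circLen c = p.length := by
    rw [hcdef]
    show P.edges.length = p.length
    rw [hPe]
  have hout : Quotient.mk (cycSetoid G H) (Quotient.out c)
      = Quotient.mk (cycSetoid G H) ⟨P, hP1⟩ := by
    rw [Quotient.out_eq]
  have hrel := Quotient.exact hout
  obtain ⟨k, hk⟩ : ∃ k, P.edges = (Quotient.out c).1.edges.rotate k := hrel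
  have hlenout : (Quotient.out c).1.edges.length = p.length := by
    have h1 := congrArg List.length hk
    rw [List.length_rotate, hPe] at h1
    exact h1.symm
  refine ⟨c, m, k % p.length, hm, by rw [hclen]; omega,
    by rw [hclen]; exact Nat.mod_lt _ hppos, ?_⟩
  have hrot : (Quotient.out c).1.edges.rotate (k % p.length) = p := by
    rw [← hlenout, List.rotate_mod, ← hk, hPe]
  rw [hrot]
  exact hflat

/-! #### Parallel edge classes -/

/-- Edges of the plugging parallel to a given edge (same source, target and color). -/
abbrev par (G H : EGraph V) (e₀ : G.E ⊕ H.E) : Type _ :=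
  {e : G.E ⊕ H.E // psrc G H e = psrc G H e₀ ∧ ptgt G H e = ptgt G H e₀ ∧
    e.isLeft = e₀.isLeft}

def parEquivL (G H : EGraph V) (g : G.E) :
    {e : G.E // G.src e = G.src g ∧ G.tgt e = G.tgt g} ≃ par G H (Sum.inl g) where
  toFun x := ⟨Sum.inl x.1, x.2.1, x.2.2, rfl⟩
  invFun y :=
    match y with
    | ⟨Sum.inl e, h⟩ => ⟨e, h.1, h.2.1⟩
    | ⟨Sum.inr _, h⟩ => absurd h.2.2 (by simp)
  left_inv := by rintro ⟨e, h⟩; rfl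
  right_inv := by
    rintro ⟨e | e, h⟩
    · rfl
    · exact absurd h.2.2 (by simp)

def parEquivR (G H : EGraph V) (g : H.E) :
    {e : H.E // H.src e = H.src g ∧ H.tgt e = H.tgt g} ≃ par G H (Sum.inr g) where
  toFun x := ⟨Sum.inr x.1, x.2.1, x.2.2, rfl⟩
  invFun y :=
    match y with
    | ⟨Sum.inr e, h⟩ => ⟨e, h.1, h.2.1⟩
    | ⟨Sum.inl _, h⟩ => absurd h.2.2 (by simp)
  left_inv := by rintro ⟨e, h⟩; rfl
  right_inv := by
    rintro ⟨e | e, h⟩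
    · exact absurd h.2.2 (by simp)
    · rfl

lemma tsum_par_inl (G H : EGraph V) (g : G.E) :
    ∑' e : par G H (Sum.inl g), pw G H e.1 = adj G (G.src g) (G.tgt g) := by
  rw [← (parEquivL G H g).tsum_eq (fun y : par G H (Sum.inl g) => pw G H y.1)]
  exact tsum_congr fun x => rfl

lemma tsum_par_inr (G H : EGraph V) (g : H.E) :
    ∑' e : par G H (Sum.inr g), pw G H e.1 = adj H (H.src g) (H.tgt g) := by
  rw [← (parEquivR G H g).tsum_eq (fun y : par G H (Sum.inr g) => pw G H y.1)]
  exact tsum_congr fun x => rfl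

lemma tsum_par_one (G H : EGraph V)
    (hG1 : ∀ v u, adj G v u ≠ 0 → adj G v u = 1)
    (hH1 : ∀ v u, adj H v u ≠ 0 → adj H v u = 1)
    (hGw : ∀ e, 0 < G.w e) (hHw : ∀ e, 0 < H.w e) (e₀ : G.E ⊕ H.E) :
    ∑' e : par G H e₀, pw G H e.1 = 1 := by
  cases e₀ with
  | inl g =>
      rw [tsum_par_inl]
      apply hG1
      intro h0
      have hle : G.w g ≤ adj G (G.src g) (G.tgt g) :=
        ENNReal.le_tsum (⟨g, rfl, rfl⟩ : {e : G.E // G.src e = G.src g ∧ G.tgt e = G.tgt g})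
      rw [h0] at hle
      exact (hGw g).ne' (le_antisymm hle zero_le)
  | inr g =>
      rw [tsum_par_inr]
      apply hH1
      intro h0
      have hle : H.w g ≤ adj H (H.src g) (H.tgt g) :=
        ENNReal.le_tsum (⟨g, rfl, rfl⟩ : {e : H.E // H.src e = H.src g ∧ H.tgt e = H.tgt g})
      rw [h0] at hle
      exact (hHw g).ne' (le_antisymm hle zero_le)

/-! #### Pattern walks -/

/-- The pattern: the `i`-th edge of the `n`-periodic repetition of `l₀`. -/
def patQ (G H : EGraph V) (l₀ : List (G.E ⊕ H.E)) (hne : l₀ ≠ []) (n : ℕ) (i : Fin n) :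
    G.E ⊕ H.E :=
  l₀[(i : ℕ) % l₀.length]'(Nat.mod_lt _ (List.length_pos_iff.mpr hne))

/-- A pattern walk: a choice of a parallel edge at every position of the pattern. -/
abbrev PatW (G H : EGraph V) (l₀ : List (G.E ⊕ H.E)) (hne : l₀ ≠ []) (n : ℕ) : Type _ :=
  ∀ i : Fin n, par G H (patQ G H l₀ hne n i)

/-- The edge word of a pattern walk. -/
def pword (G H : EGraph V) {l₀ : List (G.E ⊕ H.E)} {hne : l₀ ≠ []} {n : ℕ}
    (f : PatW G H l₀ hne n) : List (G.E ⊕ H.E) :=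
  List.ofFn (fun i => (f i).1)

lemma pword_length {l₀ : List (G.E ⊕ H.E)} {hne : l₀ ≠ []} {n : ℕ}
    (f : PatW G H l₀ hne n) : (pword G H f).length = n := by
  rw [pword, List.length_ofFn]

lemma pword_getElem {l₀ : List (G.E ⊕ H.E)} {hne : l₀ ≠ []} {n : ℕ}
    (f : PatW G H l₀ hne n) (i : ℕ) (hi : i < n) {hi' : i < (pword G H f).length} :
    (pword G H f)[i]'hi' = (f ⟨i, hi⟩).1 := by
  simp [pword, List.getElem_ofFn]

lemma pword_ne {l₀ : List (G.E ⊕ H.E)} {hne : l₀ ≠ []} {n : ℕ} (hn : 0 < n)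
    (f : PatW G H l₀ hne n) : pword G H f ≠ [] := by
  intro h0
  have := pword_length f
  rw [h0] at this
  simp at this
  omega

lemma pword_cc {l₀ : List (G.E ⊕ H.E)} {hne : l₀ ≠ []} {n : ℕ} (hn : 0 < n)
    (hdvd : l₀.length ∣ n) (hcc : CC G H l₀) (f : PatW G H l₀ hne n) :
    CC G H (pword G H f) := by
  have hL : 0 < l₀.length := List.length_pos_iff.mpr hne
  intro i
  have hlen : (pword G H f).length = n := pword_length f
  have hiw : (i : ℕ) < n := by have := i.2; omega
  have hjw : ((i : ℕ) + 1) % (pword G H f).length = ((i : ℕ) + 1) % n :=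
    congrArg (fun z => ((i : ℕ) + 1) % z) hlen
  have hjn : ((i : ℕ) + 1) % n < n := Nat.mod_lt _ hn
  have hgi : (pword G H f)[(i : ℕ)]'i.2 = (f ⟨(i : ℕ), hiw⟩).1 := pword_getElem f _ hiw
  have hgj : (pword G H f)[((i : ℕ) + 1) % (pword G H f).length]'(Nat.mod_lt _ i.pos)
      = (f ⟨((i : ℕ) + 1) % n, hjn⟩).1 := by
    refine (getElem_idx_congr _ hjw (hj := lt_of_lt_of_le hjn hlen.ge)).trans ?_
    exact pword_getElem f _ hjn
  obtain ⟨hs1, ht1, hc1⟩ := (f ⟨(i : ℕ), hiw⟩).2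
  obtain ⟨hs2, ht2, hc2⟩ := (f ⟨((i : ℕ) + 1) % n, hjn⟩).2
  have hidx : (((i : ℕ) + 1) % n) % l₀.length = ((i : ℕ) % l₀.length + 1) % l₀.length := by
    rw [Nat.mod_add_mod, Nat.mod_mod_of_dvd _ hdvd]
  have hbase := hcc ⟨(i : ℕ) % l₀.length, Nat.mod_lt _ hL⟩
  have hq2 : patQ G H l₀ hne n ⟨((i : ℕ) + 1) % n, hjn⟩
      = l₀[((i : ℕ) % l₀.length + 1) % l₀.length]'(Nat.mod_lt _ hL) :=
    getElem_idx_congr _ hidx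
  have hq1 : patQ G H l₀ hne n ⟨(i : ℕ), hiw⟩
      = l₀[(i : ℕ) % l₀.length]'(Nat.mod_lt _ hL) := rfl
  constructor
  · rw [hgi, hgj, ht1, hs2, hq1, hq2]
    exact hbase.1
  · rw [hgi, hgj, hc1, hc2, hq1, hq2]
    exact hbase.2

/-! #### Products of tsums over Pi types -/

lemma tsum_pi_prod : ∀ (n : ℕ) (κ : Fin n → Type) (u : ∀ i, κ i → ℝ≥0∞),
    ∑' f : (∀ i, κ i), ∏ i, u i (f i) = ∏ i, ∑' x : κ i, u i x := by
  intro n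
  induction n with
  | zero =>
      intro κ u
      rw [tsum_eq_single (fun i => i.elim0)]
      · simp
      · intro b hb
        exact absurd (funext fun i => i.elim0) hb
  | succ n ih =>
      intro κ u
      rw [← (Fin.consEquiv κ).tsum_eq, ENNReal.tsum_prod']
      have h1 : ∀ (a : κ 0) (g : ∀ i : Fin n, κ i.succ),
          (∏ i, u i ((Fin.consEquiv κ) (a, g) i))
            = u 0 a * ∏ i : Fin n, u i.succ (g i) := by
        intro a g
        rw [Fin.prod_univ_succ]
        simp only [Fin.consEquiv_apply, Fin.cons_zero, Fin.cons_succ]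
      calc ∑' (a : κ 0) (g : ∀ i : Fin n, κ i.succ), ∏ i, u i ((Fin.consEquiv κ) (a, g) i)
          = ∑' (a : κ 0), u 0 a * ∑' g : ∀ i : Fin n, κ i.succ, ∏ i : Fin n, u i.succ (g i) := by
            refine tsum_congr fun a => ?_
            rw [← ENNReal.tsum_mul_left]
            exact tsum_congr fun g => h1 a g
        _ = (∑' a : κ 0, u 0 a) * ∑' g : ∀ i : Fin n, κ i.succ, ∏ i : Fin n, u i.succ (g i) :=
            ENNReal.tsum_mul_right
        _ = ∏ i, ∑' x : κ i, u i x := by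
            rw [ih (fun i => κ i.succ) (fun i => u i.succ), Fin.prod_univ_succ]

/-- Total weight of pattern walks is `1`. -/
lemma tsum_patw (G H : EGraph V)
    (hG1 : ∀ v u, adj G v u ≠ 0 → adj G v u = 1)
    (hH1 : ∀ v u, adj H v u ≠ 0 → adj H v u = 1)
    (hGw : ∀ e, 0 < G.w e) (hHw : ∀ e, 0 < H.w e)
    (l₀ : List (G.E ⊕ H.E)) (hne : l₀ ≠ []) (n : ℕ) :
    ∑' f : PatW G H l₀ hne n, ((pword G H f).map (pw G H)).prod = 1 := by
  have hweight : ∀ f : PatW G H l₀ hne n,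
      ((pword G H f).map (pw G H)).prod = ∏ i, pw G H ((f i).1) := by
    intro f
    rw [pword, List.map_ofFn, List.prod_ofFn]
    exact Finset.prod_congr rfl fun i _ => rfl
  rw [tsum_congr hweight,
    tsum_pi_prod n (fun i => par G H (patQ G H l₀ hne n i)) (fun i e => pw G H e.1)]
  apply Finset.prod_eq_one
  intro i _
  exact tsum_par_one G H hG1 hH1 hGw hHw _

/-! #### The series expansion bound for `mval` -/

lemma mvalExt_le_mval (x : ℝ≥0∞) : mvalExt x ≤ mval x := by
  rcases le_or_gt 1 x with h | h
  · rw [mval, if_pos h]; exact le_top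
  · rw [mval, if_neg (not_le.mpr h)]
    have hxt : x ≠ ⊤ := ne_top_of_lt h
    have hr0 : (0 : ℝ) ≤ x.toReal := ENNReal.toReal_nonneg
    have hr1 : x.toReal < 1 := by
      have := (ENNReal.toReal_lt_toReal hxt (by simp)).mpr h
      simpa using this
    have hsum := Real.hasSum_pow_div_log_of_abs_lt_one (x := x.toReal)
      (by rwa [abs_of_nonneg hr0])
    have hterm : ∀ k : ℕ, x ^ (k + 1) / ((k : ℝ≥0∞) + 1)
        = ENNReal.ofReal (x.toReal ^ (k + 1) / ((k : ℝ) + 1)) := by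
      intro k
      rw [ENNReal.ofReal_div_of_pos (by positivity), ENNReal.ofReal_pow hr0,
        ENNReal.ofReal_toReal hxt]
      congr 1
      rw [ENNReal.ofReal_add (by positivity) zero_le_one]
      simp [ENNReal.ofReal_natCast]
    have hle : mvalExt x = ENNReal.ofReal (-Real.log (1 - x.toReal)) := by
      rw [mvalExt]
      rw [tsum_congr hterm]
      rw [← ENNReal.ofReal_tsum_of_nonneg (fun k => by positivity) hsum.summable,
        hsum.tsum_eq]
    exact le_of_eq hle

/-! #### The key lower bound -/

lemma key_lower (G H : EGraph V)
    (hG1 : ∀ v u, adj G v u ≠ 0 → adj G v u = 1)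
    (hH1 : ∀ v u, adj H v u ≠ 0 → adj H v u = 1)
    (hGw : ∀ e, 0 < G.w e) (hHw : ∀ e, 0 < H.w e)
    (l₀ : List (G.E ⊕ H.E)) (hne : l₀ ≠ []) (hcc : CC G H l₀)
    (n : ℕ) (hnpos : 0 < n) (hdvd : l₀.length ∣ n) :
    ((n : ℝ≥0∞))⁻¹ ≤ ∑' x : {x : Circ G H × ℕ // 0 < x.2 ∧ x.2 * circLen x.1 = n},
      cweight x.1.1 ^ x.1.2 / (x.1.2 : ℝ≥0∞) := by
  classical
  -- decompose every pattern walk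
  choose c m r hm hmlen hr hflat using fun f : PatW G H l₀ hne n =>
    decomp G H (pword G H f) (pword_ne hnpos f) (pword_cc hnpos hdvd hcc f)
  have hmlen' : ∀ f : PatW G H l₀ hne n, m f * circLen (c f) = n := by
    intro f
    rw [hmlen f, pword_length f]
  set Dn := {x : Circ G H × ℕ // 0 < x.2 ∧ x.2 * circLen x.1 = n} with hDn
  have hΨinj : Function.Injective
      (fun f : PatW G H l₀ hne n =>
        (⟨⟨(c f, m f), hm f, hmlen' f⟩, ⟨r f, hr f⟩⟩ : Σ x : Dn, Fin (circLen x.1.1))) := by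
    intro f f' hff
    have hc1 : c f = c f' := congrArg (fun w : (Σ x : Dn, Fin (circLen x.1.1)) => w.1.1.1) hff
    have hm2 : m f = m f' := congrArg (fun w : (Σ x : Dn, Fin (circLen x.1.1)) => w.1.1.2) hff
    have hr2 : r f = r f' :=
      congrArg (fun w : (Σ x : Dn, Fin (circLen x.1.1)) => (w.2 : ℕ)) hff
    have hw : pword G H f = pword G H f' := by
      rw [hflat f, hflat f', hc1, hm2, hr2]
    funext i
    apply Subtype.ext
    have h1 : (pword G H f)[(i : ℕ)]'(by rw [pword_length f]; exact i.2)
        = (pword G H f')[(i : ℕ)]'(by rw [pword_length f']; exact i.2) :=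
      List.getElem_of_eq hw _
    rw [pword_getElem f _ i.2, pword_getElem f' _ i.2] at h1
    exact h1
  -- weight transported through the injection
  have hwt : ∀ f : PatW G H l₀ hne n,
      ((pword G H f).map (pw G H)).prod = cweight (c f) ^ (m f) := by
    intro f
    rw [hflat f, prod_map_flatten_replicate]
    congr 1
    have h1 : (((Quotient.out (c f)).1.edges.rotate (r f)).map (pw G H)).prod
        = (((Quotient.out (c f)).1.edges).map (pw G H)).prod := by
      rw [List.map_rotate]
      exact (List.rotate_perm _ _).prod_eq
    rw [h1]
    have h2 : cweight (c f) = (Quotient.out (c f)).1.weight := by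
      conv_lhs => rw [← Quotient.out_eq (c f)]
      rfl
    rw [h2]
    rfl
  have hcomp : (1 : ℝ≥0∞)
      ≤ ∑' w : (Σ x : Dn, Fin (circLen x.1.1)), cweight w.1.1.1 ^ w.1.1.2 := by
    rw [← tsum_patw G H hG1 hH1 hGw hHw l₀ hne n]
    have heq : ∀ f : PatW G H l₀ hne n, ((pword G H f).map (pw G H)).prod
        = (fun w : (Σ x : Dn, Fin (circLen x.1.1)) => cweight w.1.1.1 ^ w.1.1.2)
          (⟨⟨(c f, m f), hm f, hmlen' f⟩, ⟨r f, hr f⟩⟩ : Σ x : Dn, Fin (circLen x.1.1)) := by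
      intro f
      rw [hwt f]
    rw [tsum_congr heq]
    exact ENNReal.tsum_comp_le_tsum_of_injective hΨinj _
  have hsigma : ∑' w : (Σ x : Dn, Fin (circLen x.1.1)), cweight w.1.1.1 ^ w.1.1.2
      = ∑' x : Dn, (circLen x.1.1 : ℝ≥0∞) * cweight x.1.1 ^ x.1.2 := by
    rw [ENNReal.tsum_sigma']
    refine tsum_congr fun x => ?_
    rw [tsum_fintype]
    simp [Finset.sum_const, nsmul_eq_mul]
  have hper : ∀ x : Dn, (circLen x.1.1 : ℝ≥0∞) * cweight x.1.1 ^ x.1.2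
      = (n : ℝ≥0∞) * (cweight x.1.1 ^ x.1.2 / (x.1.2 : ℝ≥0∞)) := by
    rintro ⟨⟨cc, mm⟩, hmm, hlen⟩
    simp only
    have hmm0 : ((mm : ℝ≥0∞)) ≠ 0 := by exact_mod_cast hmm.ne'
    have hmmt : ((mm : ℝ≥0∞)) ≠ ⊤ := ENNReal.natCast_ne_top mm
    rw [← hlen]
    push_cast
    rw [div_eq_mul_inv]
    calc (circLen cc : ℝ≥0∞) * cweight cc ^ mm
        = ((mm : ℝ≥0∞) * (mm : ℝ≥0∞)⁻¹) * ((circLen cc : ℝ≥0∞) * cweight cc ^ mm) := by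
          rw [ENNReal.mul_inv_cancel hmm0 hmmt, one_mul]
      _ = (mm : ℝ≥0∞) * (circLen cc : ℝ≥0∞) * (cweight cc ^ mm * (mm : ℝ≥0∞)⁻¹) := by ring
  have hfinal : (1 : ℝ≥0∞)
      ≤ (n : ℝ≥0∞) * ∑' x : Dn, cweight x.1.1 ^ x.1.2 / (x.1.2 : ℝ≥0∞) := by
    calc (1 : ℝ≥0∞)
        ≤ ∑' w : (Σ x : Dn, Fin (circLen x.1.1)), cweight w.1.1.1 ^ w.1.1.2 := hcomp
      _ = ∑' x : Dn, (circLen x.1.1 : ℝ≥0∞) * cweight x.1.1 ^ x.1.2 := hsigma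
      _ = ∑' x : Dn, (n : ℝ≥0∞) * (cweight x.1.1 ^ x.1.2 / (x.1.2 : ℝ≥0∞)) :=
          tsum_congr fun x => hper x
      _ = (n : ℝ≥0∞) * ∑' x : Dn, cweight x.1.1 ^ x.1.2 / (x.1.2 : ℝ≥0∞) :=
          ENNReal.tsum_mul_left
  have hn0 : ((n : ℝ≥0∞)) ≠ 0 := by exact_mod_cast hnpos.ne'
  have hnt : ((n : ℝ≥0∞)) ≠ ⊤ := ENNReal.natCast_ne_top n
  calc ((n : ℝ≥0∞))⁻¹ = (n : ℝ≥0∞)⁻¹ * 1 := (mul_one _).symm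
    _ ≤ (n : ℝ≥0∞)⁻¹ * ((n : ℝ≥0∞) * ∑' x : Dn, cweight x.1.1 ^ x.1.2 / (x.1.2 : ℝ≥0∞)) :=
        mul_le_mul_right hfinal _
    _ = ∑' x : Dn, cweight x.1.1 ^ x.1.2 / (x.1.2 : ℝ≥0∞) := by
        rw [← mul_assoc, ENNReal.inv_mul_cancel hn0 hnt, one_mul]

end ConsistencyAux

/-- Consistency: if `a = (0,A)` and `b = (0,B)` are projects of the same carrier whose
collapsed graphs are disjoint unions of weight-1 transpositions, then
`⟪a,b⟫ ∈ {0,∞}`, hence `a` and `b` are not orthogonal. In particular a conduct and its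
orthogonal cannot both contain a successful project. -/
theorem stmt12 {V : Type} [DecidableEq V] (a b : Project V)
    (hc : a.carrier = b.carrier) (ha0 : a.wager = 0) (hb0 : b.wager = 0)
    (hA : IsDUT a.graph) (hB : IsDUT b.graph) :
    (pmeas a b = 0 ∨ pmeas a b = ⊤) ∧ ¬ orth a b := by
  have hpm : pmeas a b = meas a.graph b.graph := by
    rw [pmeas, ha0, hb0, zero_add, zero_add]
  have hmain : pmeas a b = 0 ∨ pmeas a b = ⊤ := by
    rcases isEmpty_or_nonempty (Circ a.graph b.graph) with hE | hN
    · left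
      rw [hpm, meas, tsum_empty]
    · right
      rw [hpm]
      set G := a.graph with hG
      set H := b.graph with hH
      -- extract a cycle
      obtain ⟨c₀⟩ := hN
      set p₀ : AltPath G H := (Quotient.out c₀).1 with hp₀
      have hcyc₀ : p₀.IsCycle := (Quotient.out c₀).2.1
      set l₀ : List (G.E ⊕ H.E) := p₀.edges with hl₀
      have hne₀ : l₀ ≠ [] := p₀.ne
      have hcc₀ : CC G H l₀ := cc_of_cycle p₀ hcyc₀
      set L := l₀.length with hLdef
      have hLpos : 0 < L := List.length_pos_iff.mpr hne₀
      -- the chain of inequalities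
      have h1 : ∑' x : Circ G H × ℕ, cweight x.1 ^ (x.2 + 1) / ((x.2 : ℝ≥0∞) + 1)
          ≤ meas G H := by
        rw [meas]
        calc ∑' x : Circ G H × ℕ, cweight x.1 ^ (x.2 + 1) / ((x.2 : ℝ≥0∞) + 1)
            = ∑' c : Circ G H, mvalExt (cweight c) := by
              rw [ENNReal.tsum_prod']
              exact tsum_congr fun c => by rw [mvalExt]
          _ ≤ ∑' c : Circ G H, mval (cweight c) :=
              ENNReal.tsum_le_tsum fun c => mvalExt_le_mval _
      have h2 : ∑' σ : (Σ t : ℕ,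
            {x : Circ G H × ℕ // 0 < x.2 ∧ x.2 * circLen x.1 = (t + 1) * L}),
            cweight σ.2.1.1 ^ σ.2.1.2 / (σ.2.1.2 : ℝ≥0∞)
          ≤ ∑' x : Circ G H × ℕ, cweight x.1 ^ (x.2 + 1) / ((x.2 : ℝ≥0∞) + 1) := by
        set ι : (Σ t : ℕ,
            {x : Circ G H × ℕ // 0 < x.2 ∧ x.2 * circLen x.1 = (t + 1) * L}) → Circ G H × ℕ :=
          fun σ => (σ.2.1.1, σ.2.1.2 - 1) with hι
        have hinj : Function.Injective ι := by
          rintro ⟨t, ⟨⟨cc, mm⟩, hmm, hlen⟩⟩ ⟨t', ⟨⟨cc', mm'⟩, hmm', hlen'⟩⟩ h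
          simp only [hι, Prod.mk.injEq] at h
          obtain ⟨hc1, hm1⟩ := h
          have hmm2 : mm = mm' := by omega
          subst hc1
          subst hmm2
          have ht : t = t' := by
            have h3 : (t + 1) * L = (t' + 1) * L := by rw [← hlen, ← hlen']
            have := Nat.eq_of_mul_eq_mul_right hLpos h3
            omega
          subst ht
          rfl
        have hcmp := ENNReal.tsum_comp_le_tsum_of_injective hinj
          (fun x : Circ G H × ℕ => cweight x.1 ^ (x.2 + 1) / ((x.2 : ℝ≥0∞) + 1))
        refine le_trans (le_of_eq ?_) hcmp
        refine tsum_congr fun σ => ?_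
        obtain ⟨t, ⟨⟨cc, mm⟩, hmm, hlen⟩⟩ := σ
        have hmm1 : mm - 1 + 1 = mm := Nat.succ_pred_eq_of_pos hmm
        show cweight cc ^ mm / (mm : ℝ≥0∞) = cweight cc ^ (mm - 1 + 1) / (((mm - 1 : ℕ) : ℝ≥0∞) + 1)
        rw [hmm1]
        congr 1
        rw [show (((mm - 1 : ℕ) : ℝ≥0∞) + 1) = (((mm - 1 + 1 : ℕ)) : ℝ≥0∞) by push_cast; ring,
          hmm1]
      have h3 : ∑' σ : (Σ t : ℕ,
            {x : Circ G H × ℕ // 0 < x.2 ∧ x.2 * circLen x.1 = (t + 1) * L}),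
            cweight σ.2.1.1 ^ σ.2.1.2 / (σ.2.1.2 : ℝ≥0∞)
          = ∑' t : ℕ, ∑' x : {x : Circ G H × ℕ // 0 < x.2 ∧ x.2 * circLen x.1 = (t + 1) * L},
            cweight x.1.1 ^ x.1.2 / (x.1.2 : ℝ≥0∞) := by
        rw [ENNReal.tsum_sigma']
      have h4 : ∑' t : ℕ, ((((t + 1) * L : ℕ)) : ℝ≥0∞)⁻¹
          ≤ ∑' t : ℕ, ∑' x : {x : Circ G H × ℕ // 0 < x.2 ∧ x.2 * circLen x.1 = (t + 1) * L},
            cweight x.1.1 ^ x.1.2 / (x.1.2 : ℝ≥0∞) := by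
        refine ENNReal.tsum_le_tsum fun t => ?_
        exact key_lower G H hA.1 hB.1 a.wpos b.wpos l₀ hne₀ hcc₀ ((t + 1) * L)
          (Nat.mul_pos (by omega) hLpos) ⟨t + 1, by ring⟩
      have h5 : ∑' t : ℕ, ((((t + 1) * L : ℕ)) : ℝ≥0∞)⁻¹ = ⊤ := by
        by_contra hfin
        have hL0 : (L : ℝ) ≠ 0 := Nat.cast_ne_zero.mpr hLpos.ne'
        have hsummable : Summable (fun t : ℕ => (((((t + 1) * L : ℕ)) : NNReal))⁻¹) := by
          apply ENNReal.tsum_coe_ne_top_iff_summable.mp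
          intro htop
          apply hfin
          rw [← htop]
          refine tsum_congr fun t => ?_
          rw [← ENNReal.coe_natCast ((t + 1) * L),
            ← ENNReal.coe_inv (Nat.cast_ne_zero.mpr (Nat.mul_ne_zero (by omega) hLpos.ne'))]
        have hsR : Summable (fun t : ℕ => ((((t + 1) * L : ℕ)) : ℝ)⁻¹) := by
          have := NNReal.summable_coe.mpr hsummable
          refine this.congr fun t => ?_
          push_cast
          ring
        have hshift : Summable (fun t : ℕ => (((t + 1 : ℕ)) : ℝ)⁻¹) := by
          have hmul := hsR.mul_right (L : ℝ)
          refine hmul.congr fun t => ?_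
          rw [Nat.cast_mul, mul_inv, mul_assoc, inv_mul_cancel₀ hL0, mul_one]
        have hsall : Summable (fun n : ℕ => ((n : ℝ))⁻¹) :=
          (_root_.summable_nat_add_iff 1).mp hshift
        exact Real.not_summable_natCast_inv hsall
      have : (⊤ : ℝ≥0∞) ≤ meas G H := by
        calc (⊤ : ℝ≥0∞) = ∑' t : ℕ, ((((t + 1) * L : ℕ)) : ℝ≥0∞)⁻¹ := h5.symm
          _ ≤ ∑' t : ℕ, ∑' x : {x : Circ G H × ℕ // 0 < x.2 ∧ x.2 * circLen x.1 = (t + 1) * L},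
              cweight x.1.1 ^ x.1.2 / (x.1.2 : ℝ≥0∞) := h4
          _ = ∑' σ : (Σ t : ℕ,
              {x : Circ G H × ℕ // 0 < x.2 ∧ x.2 * circLen x.1 = (t + 1) * L}),
              cweight σ.2.1.1 ^ σ.2.1.2 / (σ.2.1.2 : ℝ≥0∞) := h3.symm
          _ ≤ ∑' x : Circ G H × ℕ, cweight x.1 ^ (x.2 + 1) / ((x.2 : ℝ≥0∞) + 1) := h2
          _ ≤ meas G H := h1
      exact top_le_iff.mp this
  refine ⟨hmain, ?_⟩
  rintro ⟨h01, h02⟩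
  rcases hmain with h | h
  · exact h01 h
  · exact h02 h
end

section
/- (Associativity of cut on projects) For projects a_1 = (a_1,A_1), a_2 = (a_2,A_2), a_3 = (a_3,A_3) with the intersection of the three carriers empty and all cuts defined, (a_1 ⊗ a_2) ∷ a_3 = (a_1 ∷ a_3) ∷ a_2, where both sides have underlying graph (A_1∪A_2)∷A_3 = (A_1∷A_3)∷A_2 and wager a_1+a_2+a_3+⟪A_1,A_3⟫+⟪A_1∷A_3, A_2⟫. -/
open scoped ENNReal

open EGraph

variable {V : Type} [DecidableEq V]

open Project

namespace CutAssoc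
open List

variable {α β : Type*}

/-- cyclic chain predicate -/
def CChain (R : α → α → Prop) (l : List α) : Prop :=
  l.IsChain R ∧ ∀ (h : l ≠ []), R (l.getLast h) (l.head h)

lemma cchain_rotate_one {R : α → α → Prop} {a : α} {t : List α}
    (h : CChain R (a :: t)) : CChain R (t ++ [a]) := by
  rcases eq_or_ne t [] with rfl | ht
  · simpa using h
  obtain ⟨hc, hcl⟩ := h
  constructor
  · rw [List.isChain_append]
    refine ⟨hc.tail, isChain_singleton a, ?_⟩
    intro x hx y hy
    rw [List.head?_cons, Option.mem_some_iff] at hy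
    subst hy
    rw [List.getLast?_eq_getLast_of_ne_nil ht, Option.mem_some_iff] at hx
    subst hx
    have := hcl (by simp)
    rwa [List.getLast_cons ht, List.head_cons] at this
  · intro h'
    have h1 : (t ++ [a]).getLast h' = a := by simp
    have h2 : (t ++ [a]).head h' = t.head ht := List.head_append_of_ne_nil _
    rw [h1, h2]
    have := hc
    rw [List.isChain_cons] at this
    exact this.1 (t.head ht) (by rw [List.head?_eq_head ht]; rfl)

lemma cchain_rotate {R : α → α → Prop} {l : List α} (h : CChain R l) (n : ℕ) :
    CChain R (l.rotate n) := by
  induction n generalizing l with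
  | zero => simpa [List.rotate_zero] using h
  | succ n ih =>
    cases l with
    | nil => simpa using h
    | cons a t =>
      rw [List.rotate_cons_succ]
      exact ih (cchain_rotate_one h)

/-- being an `n`-th power -/
def IsPow (n : ℕ) (l : List α) : Prop := ∃ r, l = (List.replicate n r).flatten

lemma replicate_flatten_succ (n : ℕ) (r : List α) :
    (List.replicate (n+1) r).flatten = r ++ (List.replicate n r).flatten := by
  rw [List.replicate_succ, List.flatten_cons]

lemma pow_aux {r : List α} {k : ℕ} (hk : k ≤ r.length) :
    ∀ n, (List.replicate n r).flatten ++ r.take k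
      = r.take k ++ (List.replicate n (r.rotate k)).flatten := by
  intro n
  induction n with
  | zero => simp
  | succ n ih =>
    rw [replicate_flatten_succ, replicate_flatten_succ, List.append_assoc, ih,
      ← List.append_assoc, ← List.append_assoc]
    congr 1
    rw [List.rotate_eq_drop_append_take hk, ← List.append_assoc, List.take_append_drop]

lemma rotate_pow_le {r : List α} {k : ℕ} (hk : k ≤ r.length) (n : ℕ) :
    ((List.replicate n r).flatten).rotate k = (List.replicate n (r.rotate k)).flatten := by
  cases n with
  | zero => simp
  | succ n =>
    rw [replicate_flatten_succ, replicate_flatten_succ,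
      List.rotate_eq_drop_append_take (by simp; omega),
      List.drop_append_of_le_length hk, List.take_append_of_le_length hk,
      List.append_assoc, pow_aux hk, List.rotate_eq_drop_append_take hk, List.append_assoc]

lemma rotate_pow_length {r : List α} (n : ℕ) :
    ((List.replicate n r).flatten).rotate r.length = (List.replicate n r).flatten := by
  rw [rotate_pow_le le_rfl, List.rotate_length]

lemma rotate_pow_mul {r : List α} (n q : ℕ) :
    ((List.replicate n r).flatten).rotate (q * r.length) = (List.replicate n r).flatten := by
  induction q with
  | zero => simp
  | succ q ih => rw [Nat.succ_mul, ← List.rotate_rotate, ih, rotate_pow_length]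

lemma isPow_rotate {l : List α} {n : ℕ} (h : IsPow n l) (k : ℕ) : IsPow n (l.rotate k) := by
  obtain ⟨r, rfl⟩ := h
  rcases eq_or_ne r [] with rfl | hr
  · simp [IsPow]; exact ⟨[], by simp⟩
  have hrl : 0 < r.length := List.length_pos_iff.2 hr
  refine ⟨r.rotate (k % r.length), ?_⟩
  conv_lhs => rw [show k = r.length * (k / r.length) + k % r.length from
    (Nat.div_add_mod k r.length).symm ▸ rfl, ← List.rotate_rotate, mul_comm,
    rotate_pow_mul, rotate_pow_le (le_of_lt (Nat.mod_lt _ hrl))]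

lemma primitive_rotate {l : List α} (h : PrimitiveList l) (k : ℕ) :
    PrimitiveList (l.rotate k) := by
  intro n r hnr
  rcases eq_or_ne l [] with rfl | hl
  · rw [List.rotate_nil] at hnr; exact h n r hnr
  have hpow : IsPow n (l.rotate k) := ⟨r, hnr⟩
  obtain ⟨m, hm⟩ : ∃ m, (l.rotate k).rotate m = l := by
    refine ⟨l.length * (k + 1) - k, ?_⟩
    rw [List.rotate_rotate]
    have hkle : k ≤ l.length * (k + 1) := by nlinarith [List.length_pos_iff.2 hl]
    rw [Nat.add_sub_cancel' hkle, List.rotate_length_mul]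
  obtain ⟨r', hr'⟩ := isPow_rotate hpow m
  rw [hm] at hr'
  exact h n r' hr'

lemma primitive_map {f : α → β} (hf : Function.Injective f) {l : List α} :
    PrimitiveList l → PrimitiveList (l.map f) := by
  intro h n r hnr
  rcases Nat.eq_zero_or_pos n with rfl | hn
  · simp only [List.replicate_zero, List.flatten_nil, List.map_eq_nil_iff] at hnr
    exact h 0 [] (by simp [hnr])
  have hpre : r <+: l.map f := by
    rw [hnr]
    cases n with
    | zero => omega
    | succ n => rw [replicate_flatten_succ]; exact ⟨_, rfl⟩
  have hr : r = (l.take r.length).map f := by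
    rw [List.map_take]
    obtain ⟨s, hs⟩ := hpre
    rw [← hs, List.take_left' rfl]
  rw [hr, ← List.map_replicate, ← List.map_flatten] at hnr
  exact h n _ (hf.list_map hnr)

lemma primitive_of_map {f : α → β} {l : List α} (h : PrimitiveList (l.map f)) :
    PrimitiveList l := by
  intro n r hnr
  refine h n (r.map f) ?_
  rw [hnr, List.map_flatten, List.map_replicate]

/-- splitting uniqueness at a predicate boundary -/
lemma split_unique {P : α → Prop} :
    ∀ {u₁ v₁ u₂ v₂ : List α}, u₁ ++ v₁ = u₂ ++ v₂ →
    (∀ x ∈ u₁, ¬ P x) → (∀ x ∈ u₂, ¬ P x) →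
    (∀ (h : v₁ ≠ []), P (v₁.head h)) → (∀ (h : v₂ ≠ []), P (v₂.head h)) →
    u₁ = u₂ ∧ v₁ = v₂ := by
  intro u₁
  induction u₁ with
  | nil =>
    intro v₁ u₂ v₂ h hu₁ hu₂ hv₁ hv₂
    cases u₂ with
    | nil => simpa using h
    | cons b u₂ =>
      exfalso
      simp only [List.nil_append] at h
      subst h
      exact hu₂ b (by simp) (hv₁ (by simp))
  | cons a u₁ ih =>
    intro v₁ u₂ v₂ h hu₁ hu₂ hv₁ hv₂
    cases u₂ with
    | nil =>
      exfalso
      simp only [List.nil_append] at h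
      rw [← h] at hv₂
      exact hu₁ a (by simp) (hv₂ (by simp))
    | cons b u₂ =>
      simp only [List.cons_append, List.cons.injEq] at h
      obtain ⟨rfl, h⟩ := h
      obtain ⟨h1, h2⟩ := ih h (fun x hx => hu₁ x (by simp [hx]))
        (fun x hx => hu₂ x (by simp [hx])) hv₁ hv₂
      exact ⟨by rw [h1], h2⟩

end CutAssoc
namespace CutAssoc
open EGraph List

set_option linter.unusedSectionVars false

variable {V : Type} [DecidableEq V] {G₁ G₂ G₃ : EGraph V}

/-- the chain relation of alternating paths -/
def rel (G H : EGraph V) : (G.E ⊕ H.E) → (G.E ⊕ H.E) → Prop :=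
  fun e f => ptgt G H e = psrc G H f ∧ e.isLeft ≠ f.isLeft

lemma altpath_chain_eq (G H : EGraph V) (p : AltPath G H) : p.edges.IsChain (rel G H) := p.chain

/-- embedding of letters of `G₁ □ G₃` into letters of `(G₁ ∪ G₂) □ G₃` -/
def emb : (G₁.E ⊕ G₃.E) → ((union G₁ G₂).E ⊕ G₃.E) := Sum.elim (Sum.inl ∘ Sum.inl) Sum.inr

/-- is the letter an edge of `G₂`? -/
def twoB : ((union G₁ G₂).E ⊕ G₃.E) → Bool := fun a =>
  match a with
  | .inl (.inr _) => true
  | _ => false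

lemma emb_injective : Function.Injective (emb (G₁ := G₁) (G₂ := G₂) (G₃ := G₃)) := by
  rintro (a | a) (b | b) h <;> cases h <;> rfl

lemma twoB_emb (c : G₁.E ⊕ G₃.E) : twoB (emb (G₂ := G₂) c) = false := by
  cases c <;> rfl

lemma psrc_emb (c : G₁.E ⊕ G₃.E) :
    psrc (union G₁ G₂) G₃ (emb c) = psrc G₁ G₃ c := by cases c <;> rfl

lemma ptgt_emb (c : G₁.E ⊕ G₃.E) :
    ptgt (union G₁ G₂) G₃ (emb c) = ptgt G₁ G₃ c := by cases c <;> rfl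

lemma pw_emb (c : G₁.E ⊕ G₃.E) :
    pw (union G₁ G₂) G₃ (emb c) = pw G₁ G₃ c := by cases c <;> rfl

lemma isLeft_emb (c : G₁.E ⊕ G₃.E) :
    (emb (G₂ := G₂) c).isLeft = c.isLeft := by cases c <;> rfl

lemma rel_emb (c c' : G₁.E ⊕ G₃.E) :
    rel (union G₁ G₂) G₃ (emb c) (emb c') ↔ rel G₁ G₃ c c' := by
  unfold rel
  rw [psrc_emb, ptgt_emb, isLeft_emb, isLeft_emb]

/-- a letter which is not a `G₂` edge comes from `G₁ □ G₃` -/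
def unemb : (a : (union G₁ G₂).E ⊕ G₃.E) → twoB a = false → (G₁.E ⊕ G₃.E) := fun a h =>
  match a, h with
  | .inl (.inl e), _ => .inl e
  | .inr e, _ => .inr e

lemma emb_unemb (a : (union G₁ G₂).E ⊕ G₃.E) (h : twoB a = false) : emb (unemb a h) = a := by
  rcases a with (e | e) | e
  · rfl
  · exact absurd h (by simp [twoB])
  · rfl

/-- membership of the target of a non-`G₂` letter -/
lemma ptgt_mem (c : G₁.E ⊕ G₃.E) :
    ptgt G₁ G₃ c ∈ G₁.verts ∪ G₃.verts := by
  cases c with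
  | inl e => exact Finset.mem_union_left _ (G₁.tgt_mem e)
  | inr e => exact Finset.mem_union_right _ (G₃.tgt_mem e)

lemma psrc_mem (c : G₁.E ⊕ G₃.E) :
    psrc G₁ G₃ c ∈ G₁.verts ∪ G₃.verts := by
  cases c with
  | inl e => exact Finset.mem_union_left _ (G₁.src_mem e)
  | inr e => exact Finset.mem_union_right _ (G₃.src_mem e)

/-- letters of the plugging `(G₁ ∷ G₃) □ G₂` -/
abbrev BL (G₁ G₂ G₃ : EGraph V) := (reduct G₁ G₃).E ⊕ G₂.E

/-- a `B`-letter expands to a list of big letters -/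
noncomputable def grp : BL G₁ G₂ G₃ → List ((union G₁ G₂).E ⊕ G₃.E) :=
  Sum.elim (fun p => p.1.edges.map emb) (fun e => [Sum.inl (Sum.inr e)])

lemma grp_ne_nil (b : BL G₁ G₂ G₃) : grp b ≠ [] := by
  rcases b with p | e
  · simpa [grp] using p.1.ne
  · simp [grp]

noncomputable def flat (m : List (BL G₁ G₂ G₃)) : List ((union G₁ G₂).E ⊕ G₃.E) :=
  (m.map grp).flatten

@[simp] lemma flat_nil : flat ([] : List (BL G₁ G₂ G₃)) = [] := rfl

lemma flat_cons (b : BL G₁ G₂ G₃) (m : List (BL G₁ G₂ G₃)) :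
    flat (b :: m) = grp b ++ flat m := by simp [flat]

lemma flat_append (m₁ m₂ : List (BL G₁ G₂ G₃)) :
    flat (m₁ ++ m₂) = flat m₁ ++ flat m₂ := by simp [flat]

lemma flat_ne_nil {m : List (BL G₁ G₂ G₃)} (h : m ≠ []) : flat m ≠ [] := by
  cases m with
  | nil => exact absurd rfl h
  | cons b m => rw [flat_cons]; exact fun he => grp_ne_nil b (List.append_eq_nil_iff.1 he).1

lemma head_flat {m : List (BL G₁ G₂ G₃)} (h : m ≠ []) :
    (flat m).head (flat_ne_nil h) = (grp (m.head h)).head (grp_ne_nil _) := by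
  cases m with
  | nil => exact absurd rfl h
  | cons b m =>
    rw [List.head_eq_iff_head?_eq_some, flat_cons,
      List.head?_append_of_ne_nil _ (grp_ne_nil b), List.head?_eq_head (grp_ne_nil b),
      List.head_cons]

lemma getLast_flat {m : List (BL G₁ G₂ G₃)} (h : m ≠ []) :
    (flat m).getLast (flat_ne_nil h) = (grp (m.getLast h)).getLast (grp_ne_nil _) := by
  induction m with
  | nil => exact absurd rfl h
  | cons b m ih =>
    cases m with
    | nil =>
      simp only [List.getLast_singleton]
      have : flat [b] = grp b := by simp [flat]
      exact List.getLast_congr _ _ this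
    | cons b' m' =>
      have h' : (b' :: m') ≠ [] := by simp
      have : flat (b :: b' :: m') = grp b ++ flat (b' :: m') := flat_cons _ _
      rw [List.getLast_congr _ _ this, List.getLast_append_of_ne_nil _ (flat_ne_nil h'),
        ih h', List.getLast_cons h']
      exact List.append_ne_nil_of_right_ne_nil _ (flat_ne_nil h')

/-- source of head of a group -/
lemma grp_head_src (b : BL G₁ G₂ G₃) :
    psrc (union G₁ G₂) G₃ ((grp b).head (grp_ne_nil b)) = psrc (reduct G₁ G₃) G₂ b := by
  rcases b with p | e
  · have h1 : (grp (Sum.inl p : BL G₁ G₂ G₃)).head (grp_ne_nil _)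
        = emb (p.1.edges.head p.1.ne) := by
      simp only [grp, Sum.elim_inl]
      exact List.head_map _
    rw [h1, psrc_emb]
    rfl
  · rfl

lemma grp_getLast_tgt (b : BL G₁ G₂ G₃) :
    ptgt (union G₁ G₂) G₃ ((grp b).getLast (grp_ne_nil b)) = ptgt (reduct G₁ G₃) G₂ b := by
  rcases b with p | e
  · have h1 : (grp (Sum.inl p : BL G₁ G₂ G₃)).getLast (grp_ne_nil _)
        = emb (p.1.edges.getLast p.1.ne) := by
      simp only [grp, Sum.elim_inl]
      exact List.getLast_map _
    rw [h1, ptgt_emb]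
    rfl
  · rfl

end CutAssoc
namespace CutAssoc
open EGraph List

set_option linter.unusedSectionVars false

variable {V : Type} [DecidableEq V] {G₁ G₂ G₃ : EGraph V}

lemma head_congr' {α : Type*} {l₁ l₂ : List α} (h : l₁ = l₂) (h₁ : l₁ ≠ []) :
    l₁.head h₁ = l₂.head (h ▸ h₁) := by subst h; rfl

lemma AltPath.ext' {G H : EGraph V} {p q : AltPath G H} (h : p.edges = q.edges) : p = q := by
  cases p; cases q; cases h; rfl

lemma grp_inl_head (p : (reduct G₁ G₃).E) :
    (grp (Sum.inl p : BL G₁ G₂ G₃)).head (grp_ne_nil _) = emb (p.1.edges.head p.1.ne) := by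
  simp only [grp, Sum.elim_inl]
  exact List.head_map _

lemma grp_inl_getLast (p : (reduct G₁ G₃).E) :
    (grp (Sum.inl p : BL G₁ G₂ G₃)).getLast (grp_ne_nil _)
      = emb (p.1.edges.getLast p.1.ne) := by
  simp only [grp, Sum.elim_inl]
  exact List.getLast_map _

/-- junction of consecutive groups respects the big chain relation -/
lemma junction (hd : ∀ v ∈ G₁.verts, v ∉ G₂.verts) {b b' : BL G₁ G₂ G₃}
    (h : rel (reduct G₁ G₃) G₂ b b') :
    rel (union G₁ G₂) G₃ ((grp b).getLast (grp_ne_nil b)) ((grp b').head (grp_ne_nil b')) := by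
  obtain ⟨hv, hc⟩ := h
  rcases b with p | e <;> rcases b' with p' | e'
  · exact absurd rfl hc
  · rw [grp_inl_getLast]
    set c := p.1.edges.getLast p.1.ne with hcdef
    have htgt : ptgt G₁ G₃ c = G₂.src e' := hv
    constructor
    · rw [ptgt_emb]; exact htgt
    · have : c.isLeft = false := by
        rcases c with e₁ | e₃
        · exfalso
          have h' : G₁.tgt e₁ = G₂.src e' := htgt
          exact hd _ (G₁.tgt_mem e₁) (h' ▸ G₂.src_mem e')
        · rfl
      rw [isLeft_emb, this]
      simp [grp]
      rfl
  · rw [grp_inl_head]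
    set c := p'.1.edges.head p'.1.ne with hcdef
    have hsrc : psrc G₁ G₃ c = G₂.tgt e := hv.symm
    constructor
    · rw [psrc_emb]; exact hsrc.symm
    · have : c.isLeft = false := by
        rcases c with e₁ | e₃
        · exfalso
          have h' : G₁.src e₁ = G₂.tgt e := hsrc
          exact hd _ (G₁.src_mem e₁) (h' ▸ G₂.tgt_mem e)
        · rfl
      rw [isLeft_emb, this]
      simp [grp]
      rfl
  · exact absurd rfl hc

lemma chain_flat (hd : ∀ v ∈ G₁.verts, v ∉ G₂.verts) {m : List (BL G₁ G₂ G₃)}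
    (hm : m.IsChain (rel (reduct G₁ G₃) G₂)) :
    (flat m).IsChain (rel (union G₁ G₂) G₃) := by
  rw [flat, List.isChain_flatten (by
    intro hmem
    obtain ⟨b, -, hb⟩ := List.mem_map.1 hmem
    exact grp_ne_nil b hb)]
  constructor
  · intro l hl
    obtain ⟨b, -, rfl⟩ := List.mem_map.1 hl
    rcases b with p | e
    · simp only [grp, Sum.elim_inl]
      rw [List.isChain_map]
      exact List.IsChain.imp (fun c c' hcc => (rel_emb c c').2 hcc) p.1.chain
    · exact List.isChain_singleton _
  · rw [List.isChain_map]
    refine List.IsChain.imp ?_ hm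
    intro b b' hbb x hx y hy
    rw [List.getLast?_eq_getLast_of_ne_nil (grp_ne_nil b), Option.mem_some_iff] at hx
    rw [List.head?_eq_head (grp_ne_nil b'), Option.mem_some_iff] at hy
    subst hx; subst hy
    exact junction hd hbb

lemma cchain_flat (hd : ∀ v ∈ G₁.verts, v ∉ G₂.verts) {m : List (BL G₁ G₂ G₃)}
    (hm : m ≠ []) (h : CChain (rel (reduct G₁ G₃) G₂) m) :
    CChain (rel (union G₁ G₂) G₃) (flat m) := by
  refine ⟨chain_flat hd h.1, fun h' => ?_⟩
  rw [show (flat m).getLast h' = (flat m).getLast (flat_ne_nil hm) from rfl,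
    show (flat m).head h' = (flat m).head (flat_ne_nil hm) from rfl,
    head_flat hm, getLast_flat hm]
  exact junction hd (h.2 hm)

lemma weight_flat (m : List (BL G₁ G₂ G₃)) :
    ((flat m).map (pw (union G₁ G₂) G₃)).prod = (m.map (pw (reduct G₁ G₃) G₂)).prod := by
  unfold flat
  rw [List.map_flatten, List.prod_flatten, List.map_map, List.map_map]
  congr 1
  refine List.map_congr_left ?_
  intro b _
  rcases b with p | e
  · show ((p.1.edges.map emb).map (pw (union G₁ G₂) G₃)).prod = p.1.weight
    rw [List.map_map]
    unfold AltPath.weight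
    congr 1
    exact List.map_congr_left fun c _ => pw_emb c
  · show [pw (union G₁ G₂) G₃ (Sum.inl (Sum.inr e))].prod = G₂.w e
    simp [pw, psrc, union]

/-- heads of flattenings of lists starting with a `G₂` letter are `G₂` letters -/
lemma flat_head_two {t : List (BL G₁ G₂ G₃)} (h : ∀ b ∈ t.head?, ∃ e, b = Sum.inr e) :
    ∀ (h' : flat t ≠ []), twoB ((flat t).head h') = true := by
  cases t with
  | nil => intro h'; exact absurd rfl h'
  | cons b t =>
    obtain ⟨e, rfl⟩ := h b (by simp)
    intro h'
    rw [show (flat (Sum.inr e :: t)).head h' = (flat (Sum.inr e :: t)).head (flat_ne_nil (by simp))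
      from rfl, head_flat (by simp)]
    rfl

/-- `flat` is injective on color-alternating lists -/
lemma flat_inj : ∀ {m₁ m₂ : List (BL G₁ G₂ G₃)},
    m₁.IsChain (fun b b' => b.isLeft ≠ b'.isLeft) →
    m₂.IsChain (fun b b' => b.isLeft ≠ b'.isLeft) →
    flat m₁ = flat m₂ → m₁ = m₂ := by
  intro m₁
  induction m₁ with
  | nil =>
    intro m₂ _ _ h
    cases m₂ with
    | nil => rfl
    | cons b m₂ => exact absurd h.symm (flat_ne_nil (by simp))
  | cons b m₁ ih =>
    intro m₂ h₁ h₂ h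
    cases m₂ with
    | nil => exact absurd h (flat_ne_nil (by simp))
    | cons b' m₂ =>
      rw [flat_cons, flat_cons] at h
      have key : b = b' ∧ flat m₁ = flat m₂ := by
        rcases b with p | e <;> rcases b' with p' | e'
        · -- both reduced paths
          have hsplit := split_unique (P := fun a => twoB a = true) h
            (by intro x hx
                obtain ⟨c, -, rfl⟩ := List.mem_map.1 hx
                simp [twoB_emb])
            (by intro x hx
                obtain ⟨c, -, rfl⟩ := List.mem_map.1 hx
                simp [twoB_emb])
            (flat_head_two (by
              intro x hx
              cases m₁ with
              | nil => simp at hx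
              | cons c m₁ =>
                rw [List.head?_cons, Option.mem_some_iff] at hx
                subst hx
                have hcl := List.isChain_cons_cons.1 h₁ |>.1
                rcases c with p'' | e''
                · exact absurd rfl hcl
                · exact ⟨e'', rfl⟩))
            (flat_head_two (by
              intro x hx
              cases m₂ with
              | nil => simp at hx
              | cons c m₂ =>
                rw [List.head?_cons, Option.mem_some_iff] at hx
                subst hx
                have hcl := List.isChain_cons_cons.1 h₂ |>.1
                rcases c with p'' | e''
                · exact absurd rfl hcl
                · exact ⟨e'', rfl⟩))
          refine ⟨?_, hsplit.2⟩
          have := emb_injective.list_map hsplit.1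
          exact congrArg Sum.inl (Subtype.ext (AltPath.ext' this))
        · -- inl vs inr : heads differ
          exfalso
          have h1 : (grp (Sum.inl p : BL G₁ G₂ G₃) ++ flat m₁).head (by
              simp [grp_ne_nil]) = emb (p.1.edges.head p.1.ne) := by
            rw [List.head_append_of_ne_nil (grp_ne_nil _), grp_inl_head]
          have h2 : (grp (Sum.inr e' : BL G₁ G₂ G₃) ++ flat m₂).head (by
              simp [grp_ne_nil]) = Sum.inl (Sum.inr e') := by
            rw [List.head_append_of_ne_nil (grp_ne_nil _)]; rfl
          have := h1.symm.trans ((head_congr' h _).trans h2)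
          have h3 := congrArg twoB this
          rw [twoB_emb] at h3
          exact Bool.false_ne_true h3
        · exfalso
          have h1 : (grp (Sum.inr e : BL G₁ G₂ G₃) ++ flat m₁).head (by
              simp [grp_ne_nil]) = Sum.inl (Sum.inr e) := by
            rw [List.head_append_of_ne_nil (grp_ne_nil _)]; rfl
          have h2 : (grp (Sum.inl p' : BL G₁ G₂ G₃) ++ flat m₂).head (by
              simp [grp_ne_nil]) = emb (p'.1.edges.head p'.1.ne) := by
            rw [List.head_append_of_ne_nil (grp_ne_nil _), grp_inl_head]
          have := h1.symm.trans ((head_congr' h _).trans h2)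
          have h3 := congrArg twoB this.symm
          rw [twoB_emb] at h3
          exact Bool.false_ne_true h3
        · -- both G₂ edges
          simp only [grp, Sum.elim_inr, List.singleton_append, List.cons.injEq] at h
          obtain ⟨he, hf⟩ := h
          have : e = e' := by
            injection he with he'
            injection he'
          exact ⟨by rw [this], hf⟩
      obtain ⟨rfl, hflat⟩ := key
      rw [show m₁ = m₂ from ih h₁.tail h₂.tail hflat]

lemma flat_take_rotate {m : List (BL G₁ G₂ G₃)} {g : ℕ} (hg : g ≤ m.length) :
    (flat m).rotate (flat (m.take g)).length = flat (m.rotate g) := by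
  have h1 : flat m = flat (m.take g) ++ flat (m.drop g) := by
    rw [← flat_append, List.take_append_drop]
  rw [h1, List.rotate_eq_drop_append_take (by simp), List.drop_left, List.take_left,
    ← flat_append, ← List.rotate_eq_drop_append_take hg]

lemma flat_rotate (m : List (BL G₁ G₂ G₃)) (k : ℕ) :
    ∃ j, flat (m.rotate k) = (flat m).rotate j := by
  rcases eq_or_ne m [] with rfl | hm
  · exact ⟨0, by simp⟩
  have hpos : 0 < m.length := List.length_pos_iff.2 hm
  refine ⟨(flat (m.take (k % m.length))).length, ?_⟩
  rw [flat_take_rotate (le_of_lt (Nat.mod_lt _ hpos)), List.rotate_mod]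

lemma two_get_boundary : ∀ (m : List (BL G₁ G₂ G₃)) (t : ℕ) (ht : t < (flat m).length),
    twoB ((flat m)[t]'ht) = true → ∃ g, g ≤ m.length ∧ t = (flat (m.take g)).length := by
  intro m
  induction m with
  | nil => intro t ht; simp [flat] at ht
  | cons b m ih =>
    intro t ht htwo
    rw [flat_cons] at ht
    by_cases hlt : t < (grp b).length
    · have hget : (flat (b :: m))[t]'(by rw [flat_cons]; exact ht) = (grp b)[t]'hlt := by
        rw [List.getElem_of_eq (flat_cons b m)]
        exact List.getElem_append_left hlt
      rcases b with p | e
      · exfalso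
        rw [hget] at htwo
        have : (grp (Sum.inl p : BL G₁ G₂ G₃))[t]'hlt
            = emb (p.1.edges[t]'(by simpa [grp] using hlt)) := by
          simp [grp]
        rw [this, twoB_emb] at htwo
        exact Bool.false_ne_true htwo
      · refine ⟨0, by simp, ?_⟩
        have ht0 : t = 0 := by
          simp only [grp, Sum.elim_inr, List.length_singleton] at hlt
          omega
        simp [ht0]
    · push_neg at hlt
      have ht' : t - (grp b).length < (flat m).length := by
        rw [List.length_append] at ht; omega
      have hget : (flat (b :: m))[t]'(by rw [flat_cons]; exact ht)
          = (flat m)[t - (grp b).length]'ht' := by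
        rw [List.getElem_of_eq (flat_cons b m)]
        exact List.getElem_append_right hlt
      rw [hget] at htwo
      obtain ⟨g, hg, hgt⟩ := ih _ ht' htwo
      refine ⟨g + 1, by simpa using hg, ?_⟩
      rw [List.take_succ_cons, flat_cons, List.length_append]
      omega

end CutAssoc
namespace CutAssoc
open EGraph List

set_option linter.unusedSectionVars false
set_option maxHeartbeats 1000000

variable {V : Type} [DecidableEq V] {G₁ G₂ G₃ : EGraph V}

lemma flat_head_src {m : List (BL G₁ G₂ G₃)} (hm : m ≠ []) :
    psrc (union G₁ G₂) G₃ ((flat m).head (flat_ne_nil hm))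
      = psrc (reduct G₁ G₃) G₂ (m.head hm) := by
  rw [head_flat hm, grp_head_src]

lemma flat_getLast_tgt {m : List (BL G₁ G₂ G₃)} (hm : m ≠ []) :
    ptgt (union G₁ G₂) G₃ ((flat m).getLast (flat_ne_nil hm))
      = ptgt (reduct G₁ G₃) G₂ (m.getLast hm) := by
  rw [getLast_flat hm, grp_getLast_tgt]

lemma flat_head_of_two {m : List (BL G₁ G₂ G₃)} (hm : m ≠ []) {e : G₂.E}
    (h : (flat m).head (flat_ne_nil hm) = Sum.inl (Sum.inr e)) :
    m.head hm = Sum.inr e := by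
  rw [head_flat hm] at h
  rcases hh : m.head hm with p | e'
  · rw [hh, grp_inl_head] at h
    exfalso
    rcases hhe : p.1.edges.head p.1.ne with e₁ | e₃ <;> rw [hhe] at h <;> cases h
  · rw [hh] at h
    have h9 : (Sum.inl (Sum.inr e') : (union G₁ G₂).E ⊕ G₃.E) = Sum.inl (Sum.inr e) := h
    rw [show e' = e by injection h9 with h10; injection h10]

lemma group_exists (hd : ∀ v ∈ G₁.verts, v ∉ G₂.verts) :
    ∀ (n : ℕ) (l : List ((union G₁ G₂).E ⊕ G₃.E)) (hl : l ≠ []), l.length ≤ n →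
    l.IsChain (rel (union G₁ G₂) G₃) →
    (twoB (l.head hl) = true ∨
      psrc (union G₁ G₂) G₃ (l.head hl) ∈ symmDiff G₁.verts G₃.verts) →
    (twoB (l.getLast hl) = true ∨
      ptgt (union G₁ G₂) G₃ (l.getLast hl) ∈ symmDiff G₁.verts G₃.verts) →
    ∃ m : List (BL G₁ G₂ G₃), m ≠ [] ∧ m.IsChain (rel (reduct G₁ G₃) G₂) ∧ flat m = l := by
  intro n
  induction n with
  | zero =>
    intro l hl hlen
    cases l with
    | nil => exact absurd rfl hl
    | cons a l => simp at hlen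
  | succ n ih =>
    intro l hl hlen hchain Hs Ht
    by_cases h2 : twoB (l.head hl) = true
    · -- head is a G₂ edge
      obtain ⟨e, he⟩ : ∃ e, l.head hl = (Sum.inl (Sum.inr e) : (union G₁ G₂).E ⊕ G₃.E) := by
        rcases hh : l.head hl with (e₁ | e₂) | e₃
        · rw [hh] at h2; exact absurd h2 (by simp [twoB])
        · exact ⟨e₂, rfl⟩
        · rw [hh] at h2; exact absurd h2 (by simp [twoB])
      have hl' : l = (Sum.inl (Sum.inr e) : (union G₁ G₂).E ⊕ G₃.E) :: l.tail := by
        rw [← he]; exact (List.cons_head_tail hl).symm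
      rcases eq_or_ne l.tail [] with htail | htail
      · refine ⟨[Sum.inr e], by simp, List.isChain_singleton _, ?_⟩
        rw [flat_cons, flat_nil, List.append_nil]
        rw [hl', htail]
        rfl
      · have hlen' : l.tail.length ≤ n := by
          have := List.length_tail (l := l)
          have h0 : 0 < l.length := List.length_pos_iff.2 hl
          omega
        have hchain' : l.tail.IsChain (rel (union G₁ G₂) G₃) := hchain.tail
        have hrel : rel (union G₁ G₂) G₃ (Sum.inl (Sum.inr e)) (l.tail.head htail) := by
          have hc := hchain
          rw [hl', List.isChain_cons] at hc
          exact hc.1 _ (by rw [List.head?_eq_head htail]; rfl)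
        obtain ⟨e₃, he₃⟩ : ∃ e₃, l.tail.head htail = Sum.inr e₃ := by
          rcases hh : l.tail.head htail with (f₁ | f₂) | f₃
          · rw [hh] at hrel; exact absurd rfl hrel.2
          · rw [hh] at hrel; exact absurd rfl hrel.2
          · exact ⟨f₃, rfl⟩
        have hsrc3 : G₂.tgt e = G₃.src e₃ := by
          have := hrel.1
          rw [he₃] at this
          exact this
        have Hs' : twoB (l.tail.head htail) = true ∨
            psrc (union G₁ G₂) G₃ (l.tail.head htail) ∈ symmDiff G₁.verts G₃.verts := by
          refine Or.inr ?_
          rw [he₃]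
          rw [Finset.mem_symmDiff]
          refine Or.inr ⟨G₃.src_mem e₃, fun h1 => hd _ h1 ?_⟩
          show G₃.src e₃ ∈ G₂.verts
          rw [← hsrc3]
          exact G₂.tgt_mem e
        have hlast : l.getLast hl = l.tail.getLast htail := by
          have h5 : l.getLast hl = ((Sum.inl (Sum.inr e) : (union G₁ G₂).E ⊕ G₃.E) :: l.tail).getLast (by simp) :=
            List.getLast_congr _ _ hl'
          rw [h5, List.getLast_cons htail]
        have Ht' : twoB (l.tail.getLast htail) = true ∨
            ptgt (union G₁ G₂) G₃ (l.tail.getLast htail) ∈ symmDiff G₁.verts G₃.verts := by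
          rw [← hlast]; exact Ht
        obtain ⟨m', hm'ne, hm'chain, hm'flat⟩ := ih l.tail htail hlen' hchain' Hs' Ht'
        have hhead' : twoB ((flat m').head (flat_ne_nil hm'ne)) = false := by
          rw [show (flat m').head (flat_ne_nil hm'ne) = l.tail.head htail from
            head_congr' hm'flat (flat_ne_nil hm'ne), he₃]
          rfl
        obtain ⟨p, hp⟩ : ∃ p, m'.head hm'ne = Sum.inl p := by
          rcases hh : m'.head hm'ne with p | e'
          · exact ⟨p, rfl⟩
          · exfalso
            have h3 := head_flat hm'ne
            rw [hh] at h3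
            rw [h3] at hhead'
            exact Bool.false_ne_true hhead'.symm
        refine ⟨Sum.inr e :: m', by simp, ?_, ?_⟩
        · rw [List.isChain_cons]
          refine ⟨?_, hm'chain⟩
          intro y hy
          rw [List.head?_eq_head hm'ne, Option.mem_some_iff] at hy
          subst hy
          rw [hp]
          constructor
          · show G₂.tgt e = p.1.src
            have h4 : psrc (union G₁ G₂) G₃ ((flat m').head (flat_ne_nil hm'ne))
                = psrc (reduct G₁ G₃) G₂ (m'.head hm'ne) := flat_head_src hm'ne
            rw [show (flat m').head (flat_ne_nil hm'ne) = l.tail.head htail from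
              head_congr' hm'flat (flat_ne_nil hm'ne), he₃, hp] at h4
            exact hsrc3.trans h4
          · simp
        · rw [flat_cons, hm'flat]
          exact hl'.symm
    · -- head is not a G₂ edge
      have hheadf : twoB (l.head hl) = false := by
        cases h : twoB (l.head hl)
        · rfl
        · exact absurd h h2
      set u := l.takeWhile (fun a => !twoB a) with hu
      set v := l.dropWhile (fun a => !twoB a) with hvdef
      have hluv : u ++ v = l := by
        rw [hu, hvdef, List.takeWhile_append_dropWhile]
      have hune : u ≠ [] := by
        have hl2 := (List.cons_head_tail hl).symm
        rw [hu, hl2, List.takeWhile_cons_of_pos (by simp [hheadf])]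
        simp
      have humem : ∀ x ∈ u, twoB x = false := by
        intro x hx
        have := List.mem_takeWhile_imp hx
        simpa using this
      set r : List (G₁.E ⊕ G₃.E) := u.attach.map (fun x => unemb x.1 (humem x.1 x.2)) with hr
      have hur : r.map emb = u := by
        rw [hr, List.map_map]
        have : u.attach.map (emb ∘ fun x => unemb x.1 (humem x.1 x.2))
            = u.attach.map (fun x => x.1) := by
          refine List.map_congr_left ?_
          intro x _
          exact emb_unemb _ _
        rw [this, List.attach_map_subtype_val]
      have hrne : r ≠ [] := by
        intro h
        rw [h] at hur
        exact hune hur.symm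
      have huchain : u.IsChain (rel (union G₁ G₂) G₃) := hchain.prefix (List.takeWhile_prefix _)
      have hrchain : r.IsChain (rel G₁ G₃) := by
        rw [← hur, List.isChain_map] at huchain
        exact huchain.imp (fun {c c'} hcc => (rel_emb c c').1 hcc)
      have hhead_u : u.head hune = emb (r.head hrne) := by
        rw [show u.head hune = (r.map emb).head (by rw [hur]; exact hune) from
          head_congr' hur.symm hune]
        exact List.head_map _
      have hlast_u : u.getLast hune = emb (r.getLast hrne) := by
        rw [show u.getLast hune = (r.map emb).getLast (by rw [hur]; exact hune) from by
          exact (List.getLast_congr _ _ hur.symm)]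
        exact List.getLast_map _
      have hheadlu : l.head hl = u.head hune := by
        rw [show l.head hl = (u ++ v).head (by rw [hluv]; exact hl) from
          head_congr' hluv.symm hl]
        exact List.head_append_of_ne_nil hune
      have hsrc_p : psrc G₁ G₃ (r.head hrne) ∈ symmDiff G₁.verts G₃.verts := by
        rcases Hs with h | h
        · exact absurd h h2
        · rw [← psrc_emb, ← hhead_u, ← hheadlu]
          exact h
      rcases eq_or_ne v [] with hvnil | hvne
      · -- the whole list is one reduced path
        have hul : u = l := by rw [← hluv, hvnil, List.append_nil]
        have hlastlu : l.getLast hl = u.getLast hune := (List.getLast_congr _ _ hul.symm)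
        have htgt_p : ptgt G₁ G₃ (r.getLast hrne) ∈ symmDiff G₁.verts G₃.verts := by
          rcases Ht with h | h
          · exfalso
            rw [hlastlu, hlast_u] at h
            rw [twoB_emb] at h
            exact Bool.false_ne_true h
          · rw [← ptgt_emb, ← hlast_u, ← hlastlu]
            exact h
        refine ⟨[Sum.inl ⟨⟨r, hrne, hrchain⟩, hsrc_p, htgt_p⟩], by simp,
          List.isChain_singleton _, ?_⟩
        show grp _ ++ flat [] = l
        rw [flat_nil, List.append_nil]
        show r.map emb = l
        rw [hur, hul]
      · -- there is a G₂ edge later on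
        have hvhead_two : twoB (v.head hvne) = true := by
          have := List.head_dropWhile_not (fun a => !twoB a) hvne
          simpa using this
        obtain ⟨e', hvhead⟩ : ∃ e', v.head hvne = Sum.inl (Sum.inr e') := by
          rcases hh : v.head hvne with (f₁ | f₂) | f₃
          · rw [hh] at hvhead_two; exact absurd hvhead_two (by simp [twoB])
          · exact ⟨f₂, rfl⟩
          · rw [hh] at hvhead_two; exact absurd hvhead_two (by simp [twoB])
        have hjunc : rel (union G₁ G₂) G₃ (u.getLast hune) (v.head hvne) := by
          have hc := hchain
          rw [← hluv, List.isChain_append] at hc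
          exact hc.2.2 _ (List.getLast?_eq_getLast_of_ne_nil hune) _ (List.head?_eq_head hvne)
        have htgtsrc : ptgt (union G₁ G₂) G₃ (u.getLast hune) = G₂.src e' := by
          have := hjunc.1
          rw [hvhead] at this
          exact this
        have htgt_p : ptgt G₁ G₃ (r.getLast hrne) ∈ symmDiff G₁.verts G₃.verts := by
          have hmem2 : ptgt G₁ G₃ (r.getLast hrne) ∈ G₂.verts := by
            rw [← ptgt_emb, ← hlast_u, htgtsrc]
            exact G₂.src_mem e'
          rcases hh : r.getLast hrne with e₁ | e₃
          · exfalso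
            rw [hh] at hmem2
            exact hd _ (G₁.tgt_mem e₁) hmem2
          · rw [hh] at hmem2
            rw [Finset.mem_symmDiff]
            exact Or.inr ⟨G₃.tgt_mem e₃, fun h1 => hd _ h1 hmem2⟩
        -- recurse on v
        have hulen : 0 < u.length := List.length_pos_iff.2 hune
        have hvlen : v.length ≤ n := by
          have := congrArg List.length hluv
          rw [List.length_append] at this
          omega
        have hvchain : v.IsChain (rel (union G₁ G₂) G₃) := hchain.suffix (List.dropWhile_suffix _)
        have hlastlv : l.getLast hl = v.getLast hvne := by
          rw [show l.getLast hl = (u ++ v).getLast (by rw [hluv]; exact hl) from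
            (List.getLast_congr _ _ hluv.symm)]
          exact List.getLast_append_of_ne_nil _ hvne
        obtain ⟨m', hm'ne, hm'chain, hm'flat⟩ := ih v hvne hvlen hvchain
          (Or.inl (by rw [hvhead]; rfl)) (by rw [← hlastlv]; exact Ht)
        have hm'head : m'.head hm'ne = Sum.inr e' := by
          apply flat_head_of_two hm'ne
          rw [show (flat m').head (flat_ne_nil hm'ne) = v.head hvne from
            head_congr' hm'flat (flat_ne_nil hm'ne)]
          exact hvhead
        set pE : (reduct G₁ G₃).E := ⟨⟨r, hrne, hrchain⟩, hsrc_p, htgt_p⟩ with hpE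
        refine ⟨Sum.inl pE :: m', by simp, ?_, ?_⟩
        · rw [List.isChain_cons]
          refine ⟨?_, hm'chain⟩
          intro y hy
          rw [List.head?_eq_head hm'ne, Option.mem_some_iff] at hy
          subst hy
          rw [hm'head]
          constructor
          · show ptgt G₁ G₃ (r.getLast hrne) = G₂.src e'
            rw [← ptgt_emb, ← hlast_u]
            exact htgtsrc
          · simp
        · rw [flat_cons, hm'flat]
          show r.map emb ++ v = l
          rw [hur, hluv]

end CutAssoc
namespace CutAssoc
open EGraph List

set_option linter.unusedSectionVars false
set_option maxHeartbeats 1000000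

variable {V : Type} [DecidableEq V] {G₁ G₂ G₃ : EGraph V}

lemma verts_eq (hd : ∀ v ∈ G₁.verts, v ∉ G₂.verts) :
    symmDiff (G₁.verts ∪ G₂.verts) G₃.verts
      = symmDiff (symmDiff G₁.verts G₃.verts) G₂.verts := by
  ext v
  have := hd v
  simp only [Finset.mem_symmDiff, Finset.mem_union]
  tauto

lemma mem_sd13 {v : V} (hv : v ∈ G₁.verts ∪ G₃.verts)
    (hmem : v ∈ symmDiff (G₁.verts ∪ G₂.verts) G₃.verts) :
    v ∈ symmDiff G₁.verts G₃.verts := by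
  simp only [Finset.mem_symmDiff, Finset.mem_union] at hv hmem ⊢
  tauto

lemma psrc_nonTwo_mem {a : (union G₁ G₂).E ⊕ G₃.E} (h : twoB a = false) :
    psrc (union G₁ G₂) G₃ a ∈ G₁.verts ∪ G₃.verts := by
  rcases a with (e₁ | e₂) | e₃
  · exact Finset.mem_union_left _ (G₁.src_mem e₁)
  · exact absurd h (by simp [twoB])
  · exact Finset.mem_union_right _ (G₃.src_mem e₃)

lemma ptgt_nonTwo_mem {a : (union G₁ G₂).E ⊕ G₃.E} (h : twoB a = false) :
    ptgt (union G₁ G₂) G₃ a ∈ G₁.verts ∪ G₃.verts := by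
  rcases a with (e₁ | e₂) | e₃
  · exact Finset.mem_union_left _ (G₁.tgt_mem e₁)
  · exact absurd h (by simp [twoB])
  · exact Finset.mem_union_right _ (G₃.tgt_mem e₃)

lemma psrc_two_mem {a : (union G₁ G₂).E ⊕ G₃.E} (h : twoB a = true) :
    psrc (union G₁ G₂) G₃ a ∈ G₂.verts := by
  rcases a with (e₁ | e₂) | e₃
  · exact absurd h (by simp [twoB])
  · exact G₂.src_mem e₂
  · exact absurd h (by simp [twoB])

lemma ptgt_two_mem {a : (union G₁ G₂).E ⊕ G₃.E} (h : twoB a = true) :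
    ptgt (union G₁ G₂) G₃ a ∈ G₂.verts := by
  rcases a with (e₁ | e₂) | e₃
  · exact absurd h (by simp [twoB])
  · exact G₂.tgt_mem e₂
  · exact absurd h (by simp [twoB])

/-- the forward map from edges of `(G₁ ∷ G₃) ∷ G₂` to edges of `(G₁ ∪ G₂) ∷ G₃` -/
noncomputable def fwd (hd : ∀ v ∈ G₁.verts, v ∉ G₂.verts)
    (q : (reduct (reduct G₁ G₃) G₂).E) : (reduct (union G₁ G₂) G₃).E := by
  refine ⟨⟨flat q.1.edges, flat_ne_nil q.1.ne, chain_flat hd q.1.chain⟩, ?_, ?_⟩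
  · show psrc (union G₁ G₂) G₃ ((flat q.1.edges).head _) ∈ symmDiff (G₁.verts ∪ G₂.verts) G₃.verts
    rw [show ((flat q.1.edges).head (flat_ne_nil q.1.ne))
        = (flat q.1.edges).head (flat_ne_nil q.1.ne) from rfl, flat_head_src q.1.ne,
      verts_eq hd]
    exact q.2.1
  · show ptgt (union G₁ G₂) G₃ ((flat q.1.edges).getLast _) ∈ symmDiff (G₁.verts ∪ G₂.verts) G₃.verts
    rw [show ((flat q.1.edges).getLast (flat_ne_nil q.1.ne))
        = (flat q.1.edges).getLast (flat_ne_nil q.1.ne) from rfl, flat_getLast_tgt q.1.ne,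
      verts_eq hd]
    exact q.2.2

lemma fwd_src (hd : ∀ v ∈ G₁.verts, v ∉ G₂.verts) (q : (reduct (reduct G₁ G₃) G₂).E) :
    (reduct (union G₁ G₂) G₃).src (fwd hd q) = (reduct (reduct G₁ G₃) G₂).src q := by
  show psrc (union G₁ G₂) G₃ ((flat q.1.edges).head _) = psrc (reduct G₁ G₃) G₂ _
  exact flat_head_src q.1.ne

lemma fwd_tgt (hd : ∀ v ∈ G₁.verts, v ∉ G₂.verts) (q : (reduct (reduct G₁ G₃) G₂).E) :
    (reduct (union G₁ G₂) G₃).tgt (fwd hd q) = (reduct (reduct G₁ G₃) G₂).tgt q := by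
  show ptgt (union G₁ G₂) G₃ ((flat q.1.edges).getLast _) = ptgt (reduct G₁ G₃) G₂ _
  exact flat_getLast_tgt q.1.ne

lemma fwd_w (hd : ∀ v ∈ G₁.verts, v ∉ G₂.verts) (q : (reduct (reduct G₁ G₃) G₂).E) :
    (reduct (union G₁ G₂) G₃).w (fwd hd q) = (reduct (reduct G₁ G₃) G₂).w q :=
  weight_flat q.1.edges

lemma fwd_bijective (hd : ∀ v ∈ G₁.verts, v ∉ G₂.verts) :
    Function.Bijective (fwd (G₁ := G₁) (G₂ := G₂) (G₃ := G₃) hd) := by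
  constructor
  · intro q q' h
    have hedges : flat q.1.edges = flat q'.1.edges := congrArg (fun x => x.1.edges) h
    have := flat_inj (q.1.chain.imp (fun _ _ hcc => hcc.2))
      (q'.1.chain.imp (fun _ _ hcc => hcc.2)) hedges
    exact Subtype.ext (AltPath.ext' this)
  · rintro ⟨p, hs, ht⟩
    have Hs : twoB (p.edges.head p.ne) = true ∨
        psrc (union G₁ G₂) G₃ (p.edges.head p.ne) ∈ symmDiff G₁.verts G₃.verts := by
      cases h : twoB (p.edges.head p.ne)
      · exact Or.inr (mem_sd13 (psrc_nonTwo_mem h) hs)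
      · exact Or.inl rfl
    have Ht : twoB (p.edges.getLast p.ne) = true ∨
        ptgt (union G₁ G₂) G₃ (p.edges.getLast p.ne) ∈ symmDiff G₁.verts G₃.verts := by
      cases h : twoB (p.edges.getLast p.ne)
      · exact Or.inr (mem_sd13 (ptgt_nonTwo_mem h) ht)
      · exact Or.inl rfl
    obtain ⟨m, hne, hchainB, hflat⟩ :=
      group_exists hd p.edges.length p.edges p.ne le_rfl p.chain Hs Ht
    have hsrcm : psrc (reduct G₁ G₃) G₂ (m.head hne) = p.src := by
      rw [← flat_head_src hne]
      exact congrArg _ (head_congr' hflat (flat_ne_nil hne))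
    have htgtm : ptgt (reduct G₁ G₃) G₂ (m.getLast hne) = p.tgt := by
      rw [← flat_getLast_tgt hne]
      exact congrArg _ (List.getLast_congr _ _ hflat)
    refine ⟨⟨⟨m, hne, hchainB⟩, ?_, ?_⟩, ?_⟩
    · show psrc (reduct G₁ G₃) G₂ (m.head hne) ∈ symmDiff (symmDiff G₁.verts G₃.verts) G₂.verts
      rw [hsrcm, ← verts_eq hd]
      exact hs
    · show ptgt (reduct G₁ G₃) G₂ (m.getLast hne) ∈ symmDiff (symmDiff G₁.verts G₃.verts) G₂.verts
      rw [htgtm, ← verts_eq hd]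
      exact ht
    · exact Subtype.ext (AltPath.ext' hflat)

lemma iso_part (hd : ∀ v ∈ G₁.verts, v ∉ G₂.verts) :
    EGraph.IsIso (reduct (union G₁ G₂) G₃) (reduct (reduct G₁ G₃) G₂) := by
  refine ⟨?_, ?_⟩
  · show symmDiff ((union G₁ G₂).verts) G₃.verts = _
    exact verts_eq hd
  · have key : ∀ x, fwd (G₃ := G₃) hd
        ((Equiv.ofBijective _ (fwd_bijective (G₃ := G₃) hd)).symm x) = x :=
      fun x => Equiv.ofBijective_apply_symm_apply _ (fwd_bijective (G₃ := G₃) hd) x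
    refine ⟨(Equiv.ofBijective _ (fwd_bijective (G₃ := G₃) hd)).symm,
      fun x => ?_, fun x => ?_, fun x => ?_⟩
    · conv_rhs => rw [← key x]
      exact (fwd_src hd _).symm
    · conv_rhs => rw [← key x]
      exact (fwd_tgt hd _).symm
    · conv_rhs => rw [← key x]
      exact (fwd_w hd _).symm

/-- with disjoint carriers there are no alternating circuits at all -/
lemma circ_isEmpty (hd : ∀ v ∈ G₁.verts, v ∉ G₂.verts) : IsEmpty (Circ G₁ G₂) := by
  constructor
  intro c
  induction c using Quotient.ind with
  | _ s =>
    obtain ⟨p, hcyc, -⟩ := s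
    cases hE : p.edges with
    | nil => exact p.ne hE
    | cons e₁ rest =>
      cases rest with
      | nil =>
        have h1 := hcyc.2
        have h2 : p.edges.getLast p.ne = e₁ := by
          rw [List.getLast_congr _ (List.cons_ne_nil e₁ []) hE]
          rfl
        have h3 : p.edges.head p.ne = e₁ := by
          rw [head_congr' hE]
          rfl
        rw [h2, h3] at h1
        exact h1 rfl
      | cons e₂ rest' =>
        have hch : List.IsChain _ p.edges := p.chain
        rw [hE, List.isChain_cons_cons] at hch
        obtain ⟨⟨hv, hcol⟩, -⟩ := hch
        rcases e₁ with f₁ | f₁ <;> rcases e₂ with f₂ | f₂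
        · exact hcol rfl
        · exact hd _ (G₁.tgt_mem f₁) (by rw [show G₁.tgt f₁ = G₂.src f₂ from hv]; exact G₂.src_mem f₂)
        · exact hd _ (G₁.src_mem f₂) (by rw [show G₁.src f₂ = G₂.tgt f₁ from hv.symm]; exact G₂.tgt_mem f₁)
        · exact hcol rfl

lemma meas_eq_zero (hd : ∀ v ∈ G₁.verts, v ∉ G₂.verts) : meas G₁ G₂ = 0 := by
  have := circ_isEmpty (G₁ := G₁) (G₂ := G₂) hd
  rw [meas, tsum_empty]

end CutAssoc
namespace CutAssoc
open EGraph List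

set_option linter.unusedSectionVars false
set_option maxHeartbeats 1000000

variable {V : Type} [DecidableEq V] {G₁ G₂ G₃ : EGraph V}

lemma rotate_inverse {α : Type*} (l : List α) (k : ℕ) : ∃ j, (l.rotate k).rotate j = l := by
  rcases eq_or_ne l [] with rfl | hl
  · exact ⟨0, by simp⟩
  refine ⟨l.length * (k + 1) - k, ?_⟩
  rw [List.rotate_rotate]
  have hkle : k ≤ l.length * (k + 1) := by nlinarith [List.length_pos_iff.2 hl]
  rw [Nat.add_sub_cancel' hkle, List.rotate_length_mul]

lemma isCycle_iff_cchain {G H : EGraph V} (p : AltPath G H) :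
    p.IsCycle ↔ CChain (rel G H) p.edges := by
  constructor
  · intro hc
    exact ⟨p.chain, fun h => ⟨hc.1, hc.2⟩⟩
  · intro hcc
    obtain ⟨h1, h2⟩ := hcc.2 p.ne
    exact ⟨h1, h2⟩

lemma isLeft_of_two {a : (union G₁ G₂).E ⊕ G₃.E} (h : twoB a = true) : a.isLeft = true := by
  rcases a with (e₁ | e₂) | e₃
  · rfl
  · rfl
  · exact absurd h (by simp [twoB])

lemma pre_two_sd (hd : ∀ v ∈ G₁.verts, v ∉ G₂.verts) {a b : (union G₁ G₂).E ⊕ G₃.E}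
    (hab : rel (union G₁ G₂) G₃ a b) (hb : twoB b = true) :
    twoB a = false ∧ ptgt (union G₁ G₂) G₃ a ∈ symmDiff G₁.verts G₃.verts := by
  have hmem2 : ptgt (union G₁ G₂) G₃ a ∈ G₂.verts := by
    rw [hab.1]
    exact psrc_two_mem hb
  have hcol := hab.2
  rw [isLeft_of_two hb] at hcol
  rcases a with (e₁ | e₂) | e₃
  · exact absurd rfl hcol
  · exact absurd rfl hcol
  · refine ⟨rfl, ?_⟩
    rw [Finset.mem_symmDiff]
    exact Or.inr ⟨G₃.tgt_mem e₃, fun h1 => hd _ h1 hmem2⟩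

lemma flat_getLast_of_nonTwo {m : List (BL G₁ G₂ G₃)} (hm : m ≠ [])
    (h : twoB ((flat m).getLast (flat_ne_nil hm)) = false) :
    ∃ p, m.getLast hm = Sum.inl p := by
  rcases hh : m.getLast hm with p | e'
  · exact ⟨p, rfl⟩
  · exfalso
    rw [getLast_flat hm, hh] at h
    exact Bool.false_ne_true h.symm

lemma repl_flatten_ne {α : Type*} {r : List α} (hr : r ≠ []) (n : ℕ) :
    (List.replicate (n + 1) r).flatten ≠ [] := by
  rw [replicate_flatten_succ]
  exact fun h => hr (List.append_eq_nil_iff.1 h).1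

lemma repl_flatten_head {α : Type*} {r : List α} (hr : r ≠ []) (n : ℕ) :
    ((List.replicate (n + 1) r).flatten).head (repl_flatten_ne hr n) = r.head hr := by
  rw [show ((List.replicate (n + 1) r).flatten).head (repl_flatten_ne hr n)
    = (r ++ (List.replicate n r).flatten).head (by
        rw [← replicate_flatten_succ]; exact repl_flatten_ne hr n) from
    head_congr' (replicate_flatten_succ n r) _]
  exact List.head_append_of_ne_nil hr

lemma flat_repl (s : List (BL G₁ G₂ G₃)) (k : ℕ) :
    flat ((List.replicate k s).flatten) = (List.replicate k (flat s)).flatten := by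
  induction k with
  | zero => simp
  | succ k ih => rw [replicate_flatten_succ, replicate_flatten_succ, flat_append, ih]

lemma B_color_of_chain {m : List (BL G₁ G₂ G₃)} (h : m.IsChain (rel (reduct G₁ G₃) G₂)) :
    m.IsChain (fun b b' => b.isLeft ≠ b'.isLeft) := h.imp (fun _ _ hcc => hcc.2)

/-- core: flattening a primitive `B`-cycle starting with a `G₂` edge is primitive -/
lemma prim_flat_core (hd : ∀ v ∈ G₁.verts, v ∉ G₂.verts) {e : G₂.E}
    {m' : List (BL G₁ G₂ G₃)} (hcc : CChain (rel (reduct G₁ G₃) G₂) (Sum.inr e :: m'))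
    (hprim : PrimitiveList (Sum.inr e :: m')) :
    PrimitiveList (flat (Sum.inr e :: m')) := by
  intro k r hkr
  set m : List (BL G₁ G₂ G₃) := Sum.inr e :: m' with hm
  have hmne : m ≠ [] := by simp [hm]
  have hflne : flat m ≠ [] := flat_ne_nil hmne
  have hrne : r ≠ [] := by
    rintro rfl
    rw [hkr] at hflne
    simp at hflne
  match k with
  | 0 =>
    exfalso
    rw [hkr] at hflne
    simp at hflne
  | 1 => rfl
  | (k'' + 2) =>
    -- decompose
    have hdecomp : flat m = r ++ (List.replicate (k'' + 1) r).flatten := by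
      rw [hkr, replicate_flatten_succ]
    have hrestne : (List.replicate (k'' + 1) r).flatten ≠ [] := repl_flatten_ne hrne k''
    -- head of flat m is the G₂ letter of e
    have hheadfm : (flat m).head hflne = Sum.inl (Sum.inr e) := by
      rw [head_flat hmne]
      rfl
    have hheadr : r.head hrne = Sum.inl (Sum.inr e) := by
      rw [show r.head hrne = (flat m).head hflne from by
        rw [show (flat m).head hflne = (r ++ (List.replicate (k''+1) r).flatten).head
            (by rw [← hdecomp]; exact hflne) from head_congr' hdecomp _]
        exact (List.head_append_of_ne_nil hrne).symm]
      exact hheadfm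
    have hchainfm : (flat m).IsChain (rel (union G₁ G₂) G₃) := chain_flat hd hcc.1
    have hrchain : r.IsChain (rel (union G₁ G₂) G₃) := by
      refine hchainfm.prefix ?_
      rw [hdecomp]
      exact ⟨_, rfl⟩
    -- junction between r and the rest
    have hjunc : rel (union G₁ G₂) G₃ (r.getLast hrne)
        ((List.replicate (k'' + 1) r).flatten.head hrestne) := by
      have hc := hchainfm
      rw [hdecomp, List.isChain_append] at hc
      exact hc.2.2 _ (List.getLast?_eq_getLast_of_ne_nil hrne) _ (List.head?_eq_head hrestne)
    rw [repl_flatten_head hrne, hheadr] at hjunc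
    obtain ⟨hlast_nontwo, hlast_sd⟩ := pre_two_sd hd hjunc rfl
    -- group r
    obtain ⟨s, hsne, hschain, hsflat⟩ := group_exists hd r.length r hrne le_rfl hrchain
      (Or.inl (by rw [hheadr]; rfl)) (Or.inr hlast_sd)
    -- m is the k-th power of s
    have hseq : m = (List.replicate (k'' + 2) s).flatten := by
      refine flat_inj (B_color_of_chain hcc.1) ?_ ?_
      · -- color chain of the power
        rw [List.isChain_flatten (by
          intro hmem
          rw [List.eq_of_mem_replicate hmem] at hsne
          exact hsne rfl)]
        constructor
        · intro l hl
          rw [List.eq_of_mem_replicate hl]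
          exact B_color_of_chain hschain
        · refine List.isChain_replicate_of_rel _ ?_
          intro x hx y hy
          rw [List.getLast?_eq_getLast_of_ne_nil hsne, Option.mem_some_iff] at hx
          rw [List.head?_eq_head hsne, Option.mem_some_iff] at hy
          subst hx; subst hy
          have hheads : s.head hsne = Sum.inr e := by
            apply flat_head_of_two hsne
            rw [show (flat s).head (flat_ne_nil hsne) = r.head hrne from
              head_congr' hsflat _]
            exact hheadr
          obtain ⟨p, hp⟩ : ∃ p, s.getLast hsne = Sum.inl p := by
            apply flat_getLast_of_nonTwo hsne
            rw [show (flat s).getLast (flat_ne_nil hsne) = r.getLast hrne from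
              List.getLast_congr _ _ hsflat]
            exact hlast_nontwo
          rw [hheads, hp]
          simp
      · rw [flat_repl, hsflat, hkr]
    exact hprim _ _ hseq

lemma B_cycle_has_inr {m : List (BL G₁ G₂ G₃)} (hm : m ≠ [])
    (hcc : CChain (rel (reduct G₁ G₃) G₂) m) :
    ∃ (i : ℕ) (h : i < m.length), ∃ e, m[i]'h = Sum.inr e := by
  cases m with
  | nil => exact absurd rfl hm
  | cons b m' =>
    cases m' with
    | nil =>
      exfalso
      have := hcc.2 (by simp)
      simp only [List.getLast_singleton, List.head_cons] at this
      exact this.2 rfl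
    | cons b' m'' =>
      have hch := hcc.1
      rw [List.isChain_cons_cons] at hch
      rcases b with p | e
      · rcases b' with p' | e'
        · exact absurd rfl hch.1.2
        · exact ⟨1, by simp, e', rfl⟩
      · exact ⟨0, by simp, e, rfl⟩

/-- flattening a primitive `B`-cycle is primitive -/
lemma prim_flat (hd : ∀ v ∈ G₁.verts, v ∉ G₂.verts) {m : List (BL G₁ G₂ G₃)} (hm : m ≠ [])
    (hcc : CChain (rel (reduct G₁ G₃) G₂) m) (hprim : PrimitiveList m) :
    PrimitiveList (flat m) := by
  obtain ⟨i, hi, e, hie⟩ := B_cycle_has_inr hm hcc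
  have hrotne : m.rotate i ≠ [] := by
    intro h
    rw [← List.length_eq_zero_iff, List.length_rotate, List.length_eq_zero_iff] at h
    exact hm h
  have hhead : (m.rotate i).head hrotne = Sum.inr e := by
    rw [List.head_eq_getElem, List.getElem_rotate]
    simp only [Nat.zero_add, Nat.mod_eq_of_lt hi]
    exact hie
  have hcc' : CChain (rel (reduct G₁ G₃) G₂) (m.rotate i) := cchain_rotate hcc i
  have hprim' : PrimitiveList (m.rotate i) := primitive_rotate hprim i
  have hcore : PrimitiveList (flat (m.rotate i)) := by
    rw [show m.rotate i = (m.rotate i).head hrotne :: (m.rotate i).tail from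
      (List.cons_head_tail hrotne).symm, hhead] at hcc' hprim' ⊢
    exact prim_flat_core hd hcc' hprim'
  have hrot : flat (m.rotate i) = (flat m).rotate ((flat (m.take i)).length) :=
    (flat_take_rotate (le_of_lt hi)).symm
  rw [hrot] at hcore
  obtain ⟨j, hj⟩ := rotate_inverse (flat m) ((flat (m.take i)).length)
  have := primitive_rotate hcore j
  rwa [hj] at this

end CutAssoc
namespace CutAssoc
open EGraph List

set_option linter.unusedSectionVars false
set_option maxHeartbeats 1000000

variable {V : Type} [DecidableEq V] {G₁ G₂ G₃ : EGraph V}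

lemma unflat_exists {l : List ((union G₁ G₂).E ⊕ G₃.E)} (h : ∀ x ∈ l, twoB x = false) :
    ∃ r : List (G₁.E ⊕ G₃.E), r.map emb = l := by
  refine ⟨l.attach.map (fun x => unemb x.1 (h x.1 x.2)), ?_⟩
  rw [List.map_map]
  have h2 : l.attach.map (emb ∘ fun x => unemb x.1 (h x.1 x.2))
      = l.attach.map (fun x => x.1) := by
    refine List.map_congr_left ?_
    intro x _
    exact emb_unemb _ _
  rw [h2, List.attach_map_subtype_val]

/-- a one-cycle of `G₁ □ G₃` as a one-cycle of `(G₁ ∪ G₂) □ G₃` -/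
noncomputable def cyc1 (s : {p : AltPath G₁ G₃ // p.IsOneCycle}) :
    {p : AltPath (union G₁ G₂) G₃ // p.IsOneCycle} := by
  refine ⟨⟨s.1.edges.map emb, by simpa using s.1.ne, ?_⟩, ⟨?_, ?_⟩, ?_⟩
  · show List.IsChain _ _
    rw [List.isChain_map]
    exact s.1.chain.imp (fun _ _ h => (rel_emb _ _).2 h)
  · show ptgt (union G₁ G₂) G₃ ((s.1.edges.map emb).getLast _)
        = psrc (union G₁ G₂) G₃ ((s.1.edges.map emb).head _)
    rw [List.getLast_map, List.head_map, ptgt_emb, psrc_emb]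
    exact s.2.1.1
  · show ((s.1.edges.map emb).getLast _).isLeft ≠ ((s.1.edges.map emb).head _).isLeft
    rw [List.getLast_map, List.head_map, isLeft_emb, isLeft_emb]
    exact s.2.1.2
  · exact primitive_map emb_injective s.2.2

/-- a one-cycle of `(G₁ ∷ G₃) □ G₂` as a one-cycle of `(G₁ ∪ G₂) □ G₃` -/
noncomputable def cyc2 (hd : ∀ v ∈ G₁.verts, v ∉ G₂.verts)
    (s : {p : AltPath (reduct G₁ G₃) G₂ // p.IsOneCycle}) :
    {p : AltPath (union G₁ G₂) G₃ // p.IsOneCycle} := by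
  have hcc : CChain (rel (reduct G₁ G₃) G₂) s.1.edges := (isCycle_iff_cchain s.1).1 s.2.1
  have hccf := cchain_flat hd s.1.ne hcc
  refine ⟨⟨flat s.1.edges, flat_ne_nil s.1.ne, hccf.1⟩, ⟨?_, ?_⟩,
    prim_flat hd s.1.ne hcc s.2.2⟩
  · exact (hccf.2 (flat_ne_nil s.1.ne)).1
  · exact (hccf.2 (flat_ne_nil s.1.ne)).2

noncomputable def map1 : Circ G₁ G₃ → Circ (union G₁ G₂) G₃ :=
  Quotient.map cyc1 (by
    rintro p q ⟨k, hk⟩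
    refine ⟨k, ?_⟩
    show q.1.edges.map emb = (p.1.edges.map emb).rotate k
    rw [hk, List.map_rotate])

noncomputable def map2 (hd : ∀ v ∈ G₁.verts, v ∉ G₂.verts) :
    Circ (reduct G₁ G₃) G₂ → Circ (union G₁ G₂) G₃ :=
  Quotient.map (cyc2 hd) (by
    rintro p q ⟨k, hk⟩
    show ∃ j, flat q.1.edges = (flat p.1.edges).rotate j
    rw [hk]
    exact flat_rotate p.1.edges k)

lemma cweight_map1 (c : Circ G₁ G₃) :
    cweight (map1 (G₂ := G₂) c) = cweight c := by
  induction c using Quotient.ind with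
  | _ s =>
    show ((s.1.edges.map emb).map (pw (union G₁ G₂) G₃)).prod
      = (s.1.edges.map (pw G₁ G₃)).prod
    rw [List.map_map]
    congr 1
    exact List.map_congr_left fun c _ => pw_emb c

lemma cweight_map2 (hd : ∀ v ∈ G₁.verts, v ∉ G₂.verts) (c : Circ (reduct G₁ G₃) G₂) :
    cweight (map2 hd c) = cweight c := by
  induction c using Quotient.ind with
  | _ s => exact weight_flat s.1.edges

/-- whether a circuit of `(G₁ ∪ G₂) □ G₃` passes through `G₂` -/
def hasTwoC : Circ (union G₁ G₂) G₃ → Prop :=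
  Quotient.lift (fun s => ∃ a ∈ s.1.edges, twoB a = true) (by
    rintro p q ⟨k, hk⟩
    show (∃ a ∈ p.1.edges, _) = (∃ a ∈ q.1.edges, _)
    rw [hk]
    refine propext ⟨fun ⟨a, ha, h2⟩ => ⟨a, ?_, h2⟩, fun ⟨a, ha, h2⟩ => ⟨a, ?_, h2⟩⟩
    · rwa [List.mem_rotate]
    · rwa [List.mem_rotate] at ha)

lemma not_hasTwoC_map1 (c : Circ G₁ G₃) : ¬ hasTwoC (map1 (G₂ := G₂) c) := by
  induction c using Quotient.ind with
  | _ s =>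
    rintro ⟨a, ha, h2⟩
    obtain ⟨b, -, rfl⟩ := List.mem_map.1 ha
    rw [twoB_emb] at h2
    exact Bool.false_ne_true h2

lemma hasTwoC_map2 (hd : ∀ v ∈ G₁.verts, v ∉ G₂.verts) (c : Circ (reduct G₁ G₃) G₂) :
    hasTwoC (map2 hd c) := by
  induction c using Quotient.ind with
  | _ s =>
    obtain ⟨i, hi, e, hie⟩ := B_cycle_has_inr s.1.ne ((isCycle_iff_cchain s.1).1 s.2.1)
    refine ⟨Sum.inl (Sum.inr e), ?_, rfl⟩
    show (Sum.inl (Sum.inr e) : (union G₁ G₂).E ⊕ G₃.E) ∈ flat s.1.edges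
    rw [flat]
    rw [List.mem_flatten]
    refine ⟨grp (Sum.inr e), List.mem_map.2 ⟨Sum.inr e, ?_, rfl⟩, by simp [grp]⟩
    rw [← hie]
    exact List.getElem_mem _

lemma map1_injective : Function.Injective (map1 (G₁ := G₁) (G₂ := G₂) (G₃ := G₃)) := by
  intro c c' h
  induction c using Quotient.ind with
  | _ s =>
  induction c' using Quotient.ind with
  | _ s' =>
    obtain ⟨k, hk⟩ := Quotient.exact h
    have hk' : s'.1.edges.map emb = (s.1.edges.map emb).rotate k := hk
    rw [← List.map_rotate] at hk'
    exact Quotient.sound ⟨k, emb_injective.list_map hk'⟩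

lemma map2_injective (hd : ∀ v ∈ G₁.verts, v ∉ G₂.verts) :
    Function.Injective (map2 (G₁ := G₁) (G₂ := G₂) (G₃ := G₃) hd) := by
  intro c c' h
  induction c using Quotient.ind with
  | _ s =>
  induction c' using Quotient.ind with
  | _ s' =>
    obtain ⟨t, ht⟩ := Quotient.exact h
    have ht' : flat s'.1.edges = (flat s.1.edges).rotate t := ht
    set m := s.1.edges with hmdef
    set m' := s'.1.edges with hm'def
    have hmne : m ≠ [] := s.1.ne
    have hm'ne : m' ≠ [] := s'.1.ne
    have hccm : CChain (rel (reduct G₁ G₃) G₂) m := (isCycle_iff_cchain s.1).1 s.2.1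
    have hccm' : CChain (rel (reduct G₁ G₃) G₂) m' := (isCycle_iff_cchain s'.1).1 s'.2.1
    -- rotate m' to start with a G₂ edge
    obtain ⟨i, hi, e, hie⟩ := B_cycle_has_inr hm'ne hccm'
    have hrotflat : flat (m'.rotate i) = (flat m').rotate ((flat (m'.take i)).length) :=
      (flat_take_rotate (le_of_lt hi)).symm
    have hcomb : flat (m'.rotate i)
        = (flat m).rotate (t + (flat (m'.take i)).length) := by
      rw [hrotflat, ht', List.rotate_rotate]
    have hflmne : flat m ≠ [] := flat_ne_nil hmne
    have hlen : 0 < (flat m).length := List.length_pos_iff.2 hflmne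
    set T := (t + (flat (m'.take i)).length) % (flat m).length with hTdef
    have hT : T < (flat m).length := Nat.mod_lt _ hlen
    have hcomb2 : flat (m'.rotate i) = (flat m).rotate T := by
      rw [hcomb, ← List.rotate_mod]
    -- head of flat (m'.rotate i) is a G₂ letter
    have hrotne : m'.rotate i ≠ [] := by
      intro h0
      rw [← List.length_eq_zero_iff, List.length_rotate, List.length_eq_zero_iff] at h0
      exact hm'ne h0
    have hheadrot : (m'.rotate i).head hrotne = Sum.inr e := by
      rw [List.head_eq_getElem, List.getElem_rotate]
      simp only [Nat.zero_add, Nat.mod_eq_of_lt hi]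
      exact hie
    have hheadflat : (flat (m'.rotate i)).head (flat_ne_nil hrotne) = Sum.inl (Sum.inr e) := by
      rw [head_flat hrotne, hheadrot]
      rfl
    have hgetT : twoB ((flat m)[T]'hT) = true := by
      have h1 : (flat (m'.rotate i)).head (flat_ne_nil hrotne)
          = ((flat m).rotate T).head (by rw [← hcomb2]; exact flat_ne_nil hrotne) :=
        head_congr' hcomb2 _
      rw [hheadflat] at h1
      rw [List.head_eq_getElem, List.getElem_rotate] at h1
      have h2 : (0 + T) % (flat m).length = T := by
        rw [Nat.zero_add, Nat.mod_eq_of_lt hT]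
      simp only [h2] at h1
      rw [← h1]
      rfl
    obtain ⟨g, hg, hgT⟩ := two_get_boundary m T hT hgetT
    have halign : flat (m'.rotate i) = flat (m.rotate g) := by
      rw [hcomb2, hgT, flat_take_rotate hg]
    have heq : m'.rotate i = m.rotate g :=
      flat_inj (B_color_of_chain (cchain_rotate hccm' i).1)
        (B_color_of_chain (cchain_rotate hccm g).1) halign
    obtain ⟨j, hj⟩ := rotate_inverse m' i
    refine Quotient.sound ⟨g + j, ?_⟩
    show m' = m.rotate (g + j)
    rw [← List.rotate_rotate, ← heq, hj]

lemma circ_surjective (hd : ∀ v ∈ G₁.verts, v ∉ G₂.verts) (c : Circ (union G₁ G₂) G₃) :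
    (∃ c₁ : Circ G₁ G₃, map1 c₁ = c) ∨ (∃ c₂ : Circ (reduct G₁ G₃) G₂, map2 hd c₂ = c) := by
  induction c using Quotient.ind with
  | _ s =>
  by_cases h2 : ∃ a ∈ s.1.edges, twoB a = true
  · right
    obtain ⟨a, ha, hatwo⟩ := h2
    obtain ⟨i, hi, hie⟩ := List.mem_iff_getElem.1 ha
    have hl'ne : s.1.edges.rotate i ≠ [] := by
      intro h0
      rw [← List.length_eq_zero_iff, List.length_rotate, List.length_eq_zero_iff] at h0
      exact s.1.ne h0
    have hheadl' : (s.1.edges.rotate i).head hl'ne = a := by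
      rw [List.head_eq_getElem, List.getElem_rotate]
      simp only [Nat.zero_add, Nat.mod_eq_of_lt hi]
      exact hie
    set l' := s.1.edges.rotate i with hl'def
    have hccs : CChain (rel (union G₁ G₂) G₃) s.1.edges := (isCycle_iff_cchain s.1).1 s.2.1
    have hccl' : CChain (rel (union G₁ G₂) G₃) l' := cchain_rotate hccs i
    have hheadtwo : twoB (l'.head hl'ne) = true := by rw [hheadl']; exact hatwo
    have hclose := hccl'.2 hl'ne
    obtain ⟨hlast_nontwo, hlast_sd⟩ := pre_two_sd hd hclose hheadtwo
    obtain ⟨m, hmne, hmchain, hmflat⟩ := group_exists hd l'.length l' hl'ne le_rfl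
      hccl'.1 (Or.inl hheadtwo) (Or.inr hlast_sd)
    -- m is a B one-cycle
    obtain ⟨e, he⟩ : ∃ e, l'.head hl'ne = Sum.inl (Sum.inr e) := by
      rcases hh : l'.head hl'ne with (f₁ | f₂) | f₃
      · rw [hh] at hheadtwo; exact absurd hheadtwo (by simp [twoB])
      · exact ⟨f₂, rfl⟩
      · rw [hh] at hheadtwo; exact absurd hheadtwo (by simp [twoB])
    have hmhead : m.head hmne = Sum.inr e := by
      apply flat_head_of_two hmne
      rw [show (flat m).head (flat_ne_nil hmne) = l'.head hl'ne from head_congr' hmflat _]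
      exact he
    obtain ⟨p, hp⟩ : ∃ p, m.getLast hmne = Sum.inl p := by
      apply flat_getLast_of_nonTwo hmne
      rw [show (flat m).getLast (flat_ne_nil hmne) = l'.getLast hl'ne from
        List.getLast_congr _ _ hmflat]
      exact hlast_nontwo
    have hmclose : rel (reduct G₁ G₃) G₂ (m.getLast hmne) (m.head hmne) := by
      constructor
      · rw [← flat_head_src hmne, ← flat_getLast_tgt hmne]
        rw [show (flat m).head (flat_ne_nil hmne) = l'.head hl'ne from head_congr' hmflat _,
          show (flat m).getLast (flat_ne_nil hmne) = l'.getLast hl'ne from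
            List.getLast_congr _ _ hmflat]
        exact hclose.1
      · rw [hmhead, hp]
        simp
    have hmprim : PrimitiveList m := by
      intro k u hku
      have hfl : flat m = (List.replicate k (flat u)).flatten := by
        rw [hku, flat_repl]
      rw [hmflat] at hfl
      exact primitive_rotate s.2.2 i k (flat u) hfl
    refine ⟨⟦⟨⟨m, hmne, hmchain⟩, ⟨hmclose.1, hmclose.2⟩, hmprim⟩⟧, ?_⟩
    obtain ⟨j, hj⟩ := rotate_inverse s.1.edges i
    refine Quotient.sound ⟨j, ?_⟩
    show s.1.edges = (flat m).rotate j
    rw [hmflat, hl'def, hj]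
  · left
    push_neg at h2
    have h2' : ∀ x ∈ s.1.edges, twoB x = false := by
      intro x hx
      cases h : twoB x
      · rfl
      · exact absurd h (h2 x hx)
    obtain ⟨r, hr⟩ := unflat_exists h2'
    have hrne : r ≠ [] := by
      intro h0
      rw [h0] at hr
      exact s.1.ne hr.symm
    have hrchain : r.IsChain (rel G₁ G₃) := by
      have : List.IsChain _ s.1.edges := s.1.chain
      rw [← hr, List.isChain_map] at this
      exact this.imp (fun _ _ h => (rel_emb _ _).1 h)
    have hlast : s.1.edges.getLast s.1.ne = emb (r.getLast hrne) := by
      rw [show s.1.edges.getLast s.1.ne = (r.map emb).getLast (by rw [hr]; exact s.1.ne) from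
        List.getLast_congr _ _ hr.symm]
      exact List.getLast_map _
    have hhead : s.1.edges.head s.1.ne = emb (r.head hrne) := by
      rw [show s.1.edges.head s.1.ne = (r.map emb).head (by rw [hr]; exact s.1.ne) from
        head_congr' hr.symm _]
      exact List.head_map _
    have hcyc : (⟨r, hrne, hrchain⟩ : AltPath G₁ G₃).IsCycle := by
      constructor
      · show ptgt G₁ G₃ (r.getLast hrne) = psrc G₁ G₃ (r.head hrne)
        rw [← ptgt_emb (G₂ := G₂), ← psrc_emb (G₂ := G₂), ← hlast, ← hhead]
        exact s.2.1.1
      · show (r.getLast hrne).isLeft ≠ (r.head hrne).isLeft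
        rw [← isLeft_emb (G₂ := G₂) (r.getLast hrne), ← isLeft_emb (G₂ := G₂) (r.head hrne), ← hlast, ← hhead]
        exact s.2.1.2
    have hprim : PrimitiveList r := by
      apply primitive_of_map (f := emb (G₂ := G₂))
      rw [hr]
      exact s.2.2
    refine ⟨⟦⟨⟨r, hrne, hrchain⟩, hcyc, hprim⟩⟧, ?_⟩
    refine Quotient.sound ⟨0, ?_⟩
    show s.1.edges = (r.map emb).rotate 0
    rw [List.rotate_zero, hr]

lemma tsum_sum_ennreal {α β : Type} (f : α ⊕ β → ℝ≥0∞) :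
    ∑' x, f x = (∑' a, f (Sum.inl a)) + ∑' b, f (Sum.inr b) := by
  rw [← Equiv.tsum_eq (Equiv.sumEquivSigmaBool α β).symm f, ENNReal.tsum_sigma', tsum_bool]
  rw [show (∑' (b : cond true β α), f ((Equiv.sumEquivSigmaBool α β).symm ⟨true, b⟩))
      = ∑' (b : β), f (Sum.inr b) from tsum_congr fun b => rfl,
    show (∑' (b : cond false β α), f ((Equiv.sumEquivSigmaBool α β).symm ⟨false, b⟩))
      = ∑' (a : α), f (Sum.inl a) from tsum_congr fun a => rfl, add_comm]

lemma meas_split (hd : ∀ v ∈ G₁.verts, v ∉ G₂.verts) :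
    meas (union G₁ G₂) G₃ = meas G₁ G₃ + meas (reduct G₁ G₃) G₂ := by
  have hbij : Function.Bijective
      (Sum.elim (map1 (G₂ := G₂)) (map2 hd) :
        Circ G₁ G₃ ⊕ Circ (reduct G₁ G₃) G₂ → Circ (union G₁ G₂) G₃) := by
    constructor
    · rintro (c₁ | c₁) (c₂ | c₂) h
      · rw [Sum.elim_inl, Sum.elim_inl] at h
        rw [map1_injective h]
      · exfalso
        rw [Sum.elim_inl, Sum.elim_inr] at h
        exact not_hasTwoC_map1 c₁ (by rw [h]; exact hasTwoC_map2 hd c₂)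
      · exfalso
        rw [Sum.elim_inr, Sum.elim_inl] at h
        exact not_hasTwoC_map1 c₂ (by rw [← h]; exact hasTwoC_map2 hd c₁)
      · rw [Sum.elim_inr, Sum.elim_inr] at h
        rw [map2_injective hd h]
    · intro c
      rcases circ_surjective hd c with ⟨c₁, hc₁⟩ | ⟨c₂, hc₂⟩
      · exact ⟨Sum.inl c₁, hc₁⟩
      · exact ⟨Sum.inr c₂, hc₂⟩
  rw [meas, ← Equiv.tsum_eq (Equiv.ofBijective _ hbij) (fun c => mval (cweight c))]
  rw [show (fun x => mval (cweight ((Equiv.ofBijective _ hbij) x)))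
      = (fun x => mval (cweight (Sum.elim (map1 (G₂ := G₂)) (map2 hd) x))) from rfl]
  rw [tsum_sum_ennreal (fun x => mval (cweight (Sum.elim (map1 (G₂ := G₂)) (map2 hd) x)))]
  congr 1
  · rw [meas]
    exact tsum_congr fun c => by rw [Sum.elim_inl, cweight_map1]
  · rw [meas]
    exact tsum_congr fun c => by rw [Sum.elim_inr, cweight_map2]

end CutAssoc
open EGraph in
/-- Associativity of the cut on projects: if the three carriers have empty
intersection and all cuts are defined, then `(a₁ ⊗ a₂) ∷ a₃ = (a₁ ∷ a₃) ∷ a₂`, both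
sides having underlying graph `(A₁ ∪ A₂) ∷ A₃ = (A₁ ∷ A₃) ∷ A₂` and wager
`a₁ + a₂ + a₃ + ⟪A₁,A₃⟫ + ⟪A₁ ∷ A₃, A₂⟫`. -/
theorem stmt15 {V : Type} [DecidableEq V] (a₁ a₂ a₃ : Project V)
    (h12 : a₁.carrier ∩ a₂.carrier = ∅)
    (h123 : a₁.carrier ∩ a₂.carrier ∩ a₃.carrier = ∅)
    (hd1 : pmeas (a₁.tensor a₂) a₃ ≠ ⊤) (hd2 : pmeas a₁ a₃ ≠ ⊤)
    (hd3 : pmeas (a₁.cut a₃) a₂ ≠ ⊤) :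
    ((a₁.tensor a₂).cut a₃).Equiv ((a₁.cut a₃).cut a₂) ∧
    ((a₁.tensor a₂).cut a₃).wager =
      a₁.wager + a₂.wager + a₃.wager + meas a₁.graph a₃.graph +
        meas (reduct a₁.graph a₃.graph) a₂.graph := by
  have hd : ∀ v ∈ a₁.graph.verts, v ∉ a₂.graph.verts := by
    intro v hv hv2
    have hmem : v ∈ a₁.carrier ∩ a₂.carrier := Finset.mem_inter.2 ⟨hv, hv2⟩
    rw [h12] at hmem
    exact absurd hmem (Finset.notMem_empty v)
  have hw : ((a₁.tensor a₂).cut a₃).wager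
      = a₁.wager + a₂.wager + a₃.wager + meas a₁.graph a₃.graph
        + meas (reduct a₁.graph a₃.graph) a₂.graph := by
    show (a₁.wager + a₂.wager + meas a₁.graph a₂.graph) + a₃.wager
        + meas (union a₁.graph a₂.graph) a₃.graph = _
    rw [CutAssoc.meas_eq_zero hd, CutAssoc.meas_split hd]
    ring
  refine ⟨⟨?_, ?_⟩, hw⟩
  · rw [hw]
    show _ = (a₁.wager + a₃.wager + meas a₁.graph a₃.graph) + a₂.wager
        + meas (reduct a₁.graph a₃.graph) a₂.graph
    ring
  · exact CutAssoc.iso_part hd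
end
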